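/- arXiv:1912.12343 — 4 statements merged into one kernel-verified Lean document; each statement's English description precedes it below -/
import Mathlib

section
/- Let n ≥ 2 and k ∈ Comp(n,n). Then the number of column-restricted parking functions of size n with column heights k satisfies the recursion |CPF(n,k)| = Σ_{j=1}^{i_k−1} |CPF(n−1, k̃_j)|. -/
open Finset

/-- The operation k ↦ k̃_j (0-based index `j`): decrease the `j`-th entry by 1,
then delete the leftmost zero entry of the resulting tuple. -/
def ktilde (k : List ℕ) (j : ℕ) : List ℕ :=
  (k.set j (k.getD j 0 - 1)).erase 0

/-- The asymmetric multinomial coefficient ⟨⟨n;k⟩⟩, defined by ⟨⟨1;(1)⟩⟩ = 1 and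
⟨⟨n;k⟩⟩ = Σ_{j=1}^{i_k-1} ⟨⟨n-1;k̃_j⟩⟩, where i_k is the (1-based) position of the
leftmost zero of k (i_k = n+1 if there is no zero), so that the sum has
`k.idxOf 0` terms (0-based j). -/
def amc : ℕ → List ℕ → ℕ
  | 0, _ => 0
  | 1, k => if k = [1] then 1 else 0
  | n + 2, k => ∑ j ∈ Finset.range (k.idxOf 0), amc (n + 1) (ktilde k j)

/-- `f : Fin n → Fin n` (0-based labels and columns) is a parking function:
for every `i ≤ n` at least `i` labels lie in the first `i` columns. -/
def IsParking (n : ℕ) (f : Fin n → Fin n) : Prop :=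
  ∀ i : ℕ, i ≤ n → i ≤ (univ.filter fun a => (f a : ℕ) < i).card

/-- The dominance index of the label `a`: the number of columns strictly to the left of
`a`'s column containing no label greater than `a`. -/
def domIndex {n : ℕ} (f : Fin n → Fin n) (a : Fin n) : ℕ :=
  (univ.filter fun c : Fin n => c < f a ∧ ∀ b, f b = c → b < a).card

/-- Column-restricted parking function: every (1-based) label `a+1` satisfies
`d_f(a) < a+1`. -/
def IsCPF (n : ℕ) (f : Fin n → Fin n) : Prop :=
  IsParking n f ∧ ∀ a : Fin n, domIndex f a < (a : ℕ) + 1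

/-- The list of column heights of `f`. -/
def colHeights {n : ℕ} (f : Fin n → Fin n) : List ℕ :=
  List.ofFn fun c : Fin n => (univ.filter fun a => f a = c).card

/-- The number of column-restricted parking functions of size `n`. -/
noncomputable def cpfCount (n : ℕ) : ℕ := Nat.card {f : Fin n → Fin n // IsCPF n f}

/-- The number of column-restricted parking functions of size `n` with column heights `k`. -/
noncomputable def cpfCountWith (n : ℕ) (k : List ℕ) : ℕ :=
  Nat.card {f : Fin n → Fin n // IsCPF n f ∧ colHeights f = k}

/-- A composition `k` of `n` of length `n` is Catalan if `k_1 + ⋯ + k_j ≥ j` for all `j < n`. -/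
def IsCatalan (n : ℕ) (k : List ℕ) : Prop :=
  ∀ j < n, j ≤ (k.take j).sum


section AuxList

lemma aux_indexOf_zero_le : ∀ (l : List ℕ) (c : ℕ), c < l.length → l.getD c 0 = 0 →
    l.idxOf 0 ≤ c := by
  intro l
  induction l with
  | nil => intro c hc; simp at hc
  | cons a l ih =>
    intro c hc h
    cases c with
    | zero =>
      simp only [List.getD_cons_zero] at h
      subst h
      simp
    | succ c =>
      rcases eq_or_ne a 0 with rfl | ha
      · simp
      · rw [List.idxOf_cons_ne _ ha]
        have := ih c (by simpa using hc) (by simpa using h)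
        omega

lemma aux_getD_ne_zero {l : List ℕ} {c : ℕ} (h : c < l.idxOf 0) (hc : c < l.length) :
    l.getD c 0 ≠ 0 := fun h0 => absurd (aux_indexOf_zero_le l c hc h0) (by omega)

lemma aux_length_le_sum : ∀ (l : List ℕ), (∀ y ∈ l, y ≠ 0) → l.length ≤ l.sum := by
  intro l
  induction l with
  | nil => simp
  | cons a l ih =>
    intro h
    have h1 := ih (fun y hy => h y (List.mem_cons_of_mem _ hy))
    have h2 := h a (List.mem_cons_self)
    simp only [List.length_cons, List.sum_cons]
    omega

lemma aux_length_lt_sum : ∀ (l : List ℕ), (∀ y ∈ l, y ≠ 0) → ∀ x ∈ l, 2 ≤ x →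
    l.length < l.sum := by
  intro l
  induction l with
  | nil => intro _ x hx; simp at hx
  | cons a l ih =>
    intro h x hx h2
    simp only [List.length_cons, List.sum_cons]
    rcases List.mem_cons.1 hx with rfl | hx'
    · have := aux_length_le_sum l (fun y hy => h y (List.mem_cons_of_mem _ hy))
      omega
    · have := ih (fun y hy => h y (List.mem_cons_of_mem _ hy)) x hx' h2
      have := h a (List.mem_cons_self)
      omega

lemma aux_getD_set (k : List ℕ) (j c v : ℕ) (hj : j < k.length) :
    (k.set j v).getD c 0 = if c = j then v else k.getD c 0 := by
  rcases lt_or_ge c k.length with hc | hc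
  · rw [List.getD_eq_getElem _ _ (by simpa using hc), List.getElem_set]
    rcases eq_or_ne c j with rfl | hne
    · simp
    · rw [if_neg (by omega), if_neg hne, List.getD_eq_getElem _ _ hc]
  · have hcj : c ≠ j := by omega
    rw [if_neg hcj, List.getD_eq_default _ _ (by simpa using hc),
      List.getD_eq_default _ _ hc]

end AuxList
section AuxCard

lemma aux_card_filter_succ {m : ℕ} (p : Fin (m + 1) → Prop) [DecidablePred p] :
    (univ.filter p).card
      = (if p 0 then 1 else 0) + (univ.filter fun a : Fin m => p a.succ).card := by
  rw [Finset.card_filter, Finset.card_filter, Fin.sum_univ_succ]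

lemma aux_card_lt_eq_sum {M : ℕ} (h : Fin M → Fin M) (t : ℕ) :
    (univ.filter fun x => (h x : ℕ) < t).card
      = ∑ c ∈ Finset.range t, (univ.filter fun x => (h x : ℕ) = c).card := by
  rw [Finset.card_eq_sum_card_fiberwise (f := fun x => (h x : ℕ)) (t := Finset.range t)
      (fun x hx => by simpa using (Finset.mem_filter.1 hx).2)]
  refine Finset.sum_congr rfl fun c hc => ?_
  congr 1
  ext x
  simp only [Finset.mem_range] at hc
  simp only [Finset.mem_filter, Finset.mem_univ, true_and, and_iff_right_iff_imp]
  omega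

lemma aux_colHeights_length {M : ℕ} (f : Fin M → Fin M) : (colHeights f).length = M := by
  simp [colHeights]

lemma aux_colHeights_getD {M : ℕ} (f : Fin M → Fin M) (c : ℕ) (hc : c < M) :
    (colHeights f).getD c 0 = (univ.filter fun b => (f b : ℕ) = c).card := by
  rw [colHeights, List.getD_eq_getElem _ _ (by simpa using hc), List.getElem_ofFn]
  congr 1
  ext b
  simp [Fin.ext_iff]

end AuxCard
section Rel

/-- relation between a size-(m+1) function and a size-m function after removing label 0
and column `c0`. -/
def ReL {m : ℕ} (c0 jv : ℕ) (f : Fin (m + 1) → Fin (m + 1)) (g : Fin m → Fin m) : Prop :=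
  (f 0 : ℕ) = jv ∧
    ∀ a : Fin m, (f a.succ : ℕ) = if (g a : ℕ) < c0 then (g a : ℕ) else (g a : ℕ) + 1

variable {m c0 jv : ℕ} {f : Fin (m + 1) → Fin (m + 1)} {g : Fin m → Fin m}

lemma ReL.ne (h : ReL c0 jv f g) (a : Fin m) : (f a.succ : ℕ) ≠ c0 := by
  have := h.2 a; split at this <;> omega

lemma ReL.count (h : ReL c0 jv f g) (i : ℕ) :
    (univ.filter fun b : Fin (m + 1) => (f b : ℕ) < i).card
      = (if jv < i then 1 else 0)
        + (univ.filter fun a : Fin m => (g a : ℕ) < if i ≤ c0 then i else i - 1).card := by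
  rw [aux_card_filter_succ (fun b => (f b : ℕ) < i)]
  congr 1
  · rw [h.1]
  · congr 1
    refine Finset.filter_congr fun a _ => ?_
    have h2 := h.2 a
    rw [h2]
    split_ifs <;> omega

lemma ReL.fiber (h : ReL c0 jv f g) {c : ℕ} (hc : c ≠ c0) :
    (univ.filter fun b : Fin (m + 1) => (f b : ℕ) = c).card
      = (if jv = c then 1 else 0)
        + (univ.filter fun a : Fin m => (g a : ℕ) = if c < c0 then c else c - 1).card := by
  rw [aux_card_filter_succ (fun b => (f b : ℕ) = c)]
  congr 1
  · rw [h.1]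
  · congr 1
    refine Finset.filter_congr fun a _ => ?_
    have h2 := h.2 a
    rw [h2]
    split_ifs <;> omega

lemma ReL.fiber_c0 (h : ReL c0 jv f g) :
    (univ.filter fun b : Fin (m + 1) => (f b : ℕ) = c0).card
      = if jv = c0 then 1 else 0 := by
  rw [aux_card_filter_succ (fun b => (f b : ℕ) = c0)]
  have he : (univ.filter fun a : Fin m => (f a.succ : ℕ) = c0) = ∅ :=
    Finset.filter_eq_empty_iff.2 fun a _ => h.ne a
  rw [he, Finset.card_empty, h.1, add_zero]

end Rel

section Maps

/-- forward map: delete label `0` and column `c0`. -/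
def fwdF {m : ℕ} (c0 : ℕ) (f : Fin (m + 1) → Fin (m + 1)) : Fin m → Fin m :=
  fun a => ⟨(if (f a.succ : ℕ) < c0 then (f a.succ : ℕ) else (f a.succ : ℕ) - 1) % m,
    Nat.mod_lt _ a.pos⟩

/-- backward map: insert label `0` in column `jv` and reinsert column `c0`. -/
def bwdF {m : ℕ} (c0 jv : ℕ) (g : Fin m → Fin m) : Fin (m + 1) → Fin (m + 1) :=
  Fin.cases ⟨jv % (m + 1), Nat.mod_lt _ m.succ_pos⟩
    (fun a => if (g a : ℕ) < c0 then (g a).castSucc else (g a).succ)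

variable {m c0 jv : ℕ} {f : Fin (m + 1) → Fin (m + 1)} {g : Fin m → Fin m}

lemma fwdF_val (hc0 : c0 ≤ m) (a : Fin m) (hne : (f a.succ : ℕ) ≠ c0) :
    ((fwdF c0 f a : Fin m) : ℕ)
      = if (f a.succ : ℕ) < c0 then (f a.succ : ℕ) else (f a.succ : ℕ) - 1 := by
  have h1 : (f a.succ : ℕ) < m + 1 := (f a.succ).isLt
  have hm := a.pos
  exact Nat.mod_eq_of_lt (by split <;> omega)

lemma rel_fwd (hc0 : c0 ≤ m) (hne : ∀ a : Fin m, (f a.succ : ℕ) ≠ c0)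
    (hf0 : (f 0 : ℕ) = jv) : ReL c0 jv f (fwdF c0 f) := by
  refine ⟨hf0, fun a => ?_⟩
  rw [fwdF_val hc0 a (hne a)]
  have := hne a
  have : (f a.succ : ℕ) < m + 1 := (f a.succ).isLt
  have := hne a
  split_ifs <;> omega

lemma rel_bwd (hjv : jv ≤ m) (g : Fin m → Fin m) : ReL c0 jv (bwdF c0 jv g) g := by
  constructor
  · show ((bwdF c0 jv g) 0 : ℕ) = jv
    simp only [bwdF, Fin.cases_zero]
    exact Nat.mod_eq_of_lt (by omega)
  · intro a
    show ((bwdF c0 jv g) a.succ : ℕ) = _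
    simp only [bwdF, Fin.cases_succ]
    split <;> simp

lemma ReL.bwd_eq (h : ReL c0 jv f g) : bwdF c0 jv g = f := by
  funext b
  induction b using Fin.cases with
  | zero =>
    apply Fin.ext
    show jv % (m + 1) = _
    have := (f 0).isLt
    rw [← h.1]
    exact Nat.mod_eq_of_lt (by omega)
  | succ a =>
    apply Fin.ext
    have h2 := h.2 a
    show ((if (g a : ℕ) < c0 then (g a).castSucc else (g a).succ : Fin (m + 1)) : ℕ) = _
    rw [h2]
    split <;> simp

lemma ReL.fwd_eq (h : ReL c0 jv f g) (hc0 : c0 ≤ m) : fwdF c0 f = g := by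
  funext a
  apply Fin.ext
  rw [fwdF_val hc0 a (h.ne a)]
  have h2 := h.2 a
  have := h.ne a
  split_ifs at h2 ⊢ <;> omega

end Maps
section Dom

variable {m c0 jv : ℕ} {f : Fin (m + 1) → Fin (m + 1)} {g : Fin m → Fin m}

lemma ReL.dom (h : ReL c0 jv f g) (hc0 : c0 ≤ m) (a : Fin m) :
    domIndex f a.succ
      = (if c0 < (f a.succ : ℕ) then 1 else 0) + domIndex g a := by
  classical
  have hm : 0 < m := a.pos
  unfold domIndex
  set c0f : Fin (m + 1) := ⟨c0, by omega⟩ with hc0f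
  set S : Finset (Fin (m + 1)) :=
    univ.filter fun c : Fin (m + 1) => c < f a.succ ∧ ∀ b, f b = c → b < a.succ with hS
  have hsplit := Finset.card_filter_add_card_filter_not
    (s := S) (p := fun c => c = c0f)
  have hmemP : c0f ∈ S ↔ c0 < (f a.succ : ℕ) := by
    rw [hS, Finset.mem_filter]
    constructor
    · rintro ⟨-, h1, -⟩
      exact Fin.lt_def.1 h1
    · intro h1
      refine ⟨Finset.mem_univ _, Fin.lt_def.2 h1, fun b hb => ?_⟩
      induction b using Fin.cases with
      | zero => exact Fin.succ_pos a
      | succ b' => exact absurd (congrArg Fin.val hb) (h.ne b')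
  have h1 : (S.filter fun c => c = c0f).card = if c0 < (f a.succ : ℕ) then 1 else 0 := by
    rw [Finset.filter_eq']
    split_ifs with hmem hlt hlt
    · simp
    · exact absurd (hmemP.1 hmem) hlt
    · exact absurd (hmemP.2 hlt) hmem
    · simp
  have h2 : (S.filter fun c => ¬c = c0f).card
      = (univ.filter fun c' : Fin m => c' < g a ∧ ∀ b', g b' = c' → b' < a).card := by
    symm
    refine Finset.card_bij
      (i := fun c' _ => if (c' : ℕ) < c0 then c'.castSucc else c'.succ) ?_ ?_ ?_
    · -- maps to
      intro c' hc'
      rw [Finset.mem_filter] at hc'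
      obtain ⟨-, hlt, hdom⟩ := hc'
      have hva : (f a.succ : ℕ) = if (g a : ℕ) < c0 then (g a : ℕ) else (g a : ℕ) + 1 := h.2 a
      have hglt : (c' : ℕ) < (g a : ℕ) := Fin.lt_def.1 hlt
      have hval : ((if (c' : ℕ) < c0 then c'.castSucc else c'.succ : Fin (m + 1)) : ℕ)
          = if (c' : ℕ) < c0 then (c' : ℕ) else (c' : ℕ) + 1 := by split <;> simp
      rw [Finset.mem_filter, Finset.mem_filter]
      refine ⟨⟨Finset.mem_univ _, ?_, ?_⟩, ?_⟩
      · rw [Fin.lt_def, hval, hva]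
        split_ifs <;> omega
      · intro b hb
        induction b using Fin.cases with
        | zero => exact Fin.succ_pos a
        | succ b' =>
          have hvb : (f b'.succ : ℕ)
              = if (g b' : ℕ) < c0 then (g b' : ℕ) else (g b' : ℕ) + 1 := h.2 b'
          have hvb2 := congrArg Fin.val hb
          rw [hvb, hval] at hvb2
          have : g b' = c' := Fin.ext (by split_ifs at hvb2 <;> omega)
          exact Fin.succ_lt_succ_iff.2 (hdom b' this)
      · intro hceq
        have := congrArg Fin.val hceq
        rw [hval] at this
        simp only [hc0f] at this
        split_ifs at this <;> omega
    · -- injective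
      intro c1 h1' c2 h2' heq
      have hv := congrArg Fin.val heq
      have hval1 : ((if (c1 : ℕ) < c0 then c1.castSucc else c1.succ : Fin (m + 1)) : ℕ)
          = if (c1 : ℕ) < c0 then (c1 : ℕ) else (c1 : ℕ) + 1 := by split <;> simp
      have hval2 : ((if (c2 : ℕ) < c0 then c2.castSucc else c2.succ : Fin (m + 1)) : ℕ)
          = if (c2 : ℕ) < c0 then (c2 : ℕ) else (c2 : ℕ) + 1 := by split <;> simp
      rw [hval1, hval2] at hv
      apply Fin.ext
      split_ifs at hv <;> omega
    · -- surjective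
      intro c hc
      rw [Finset.mem_filter, Finset.mem_filter] at hc
      obtain ⟨⟨-, hlt, hdom⟩, hne⟩ := hc
      have hnec0 : (c : ℕ) ≠ c0 := fun hv => hne (Fin.ext hv)
      have hcm : (c : ℕ) < m + 1 := c.isLt
      have hva : (f a.succ : ℕ) = if (g a : ℕ) < c0 then (g a : ℕ) else (g a : ℕ) + 1 := h.2 a
      have hflt : (c : ℕ) < (f a.succ : ℕ) := Fin.lt_def.1 hlt
      have hfm : (f a.succ : ℕ) < m + 1 := (f a.succ).isLt
      have hcvlt : (if (c : ℕ) < c0 then (c : ℕ) else (c : ℕ) - 1) < m := by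
        split_ifs <;> omega
      set cv : Fin m := ⟨if (c : ℕ) < c0 then (c : ℕ) else (c : ℕ) - 1, hcvlt⟩ with hcvdef
      have hval : (cv : ℕ) = if (c : ℕ) < c0 then (c : ℕ) else (c : ℕ) - 1 := rfl
      have hicv : ((if (cv : ℕ) < c0 then cv.castSucc else cv.succ : Fin (m + 1)) : ℕ) = (c : ℕ) := by
        have : ((if (cv : ℕ) < c0 then cv.castSucc else cv.succ : Fin (m + 1)) : ℕ)
            = if (cv : ℕ) < c0 then (cv : ℕ) else (cv : ℕ) + 1 := by split <;> simp
        rw [this, hval]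
        split_ifs <;> omega
      refine ⟨cv, ?_, Fin.ext hicv⟩
      rw [Finset.mem_filter]
      refine ⟨Finset.mem_univ _, Fin.lt_def.2 ?_, fun b' hb' => ?_⟩
      · rw [hval]
        rw [hva] at hflt
        split_ifs at hflt ⊢ <;> omega
      · have hvb : (f b'.succ : ℕ)
            = if (g b' : ℕ) < c0 then (g b' : ℕ) else (g b' : ℕ) + 1 := h.2 b'
        have hgv := congrArg Fin.val hb'
        rw [hval] at hgv
        have hfb : f b'.succ = c := by
          apply Fin.ext
          rw [hvb]
          split_ifs at hgv ⊢ <;> omega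
        exact Fin.succ_lt_succ_iff.1 (hdom b'.succ hfb)
  omega

lemma aux_dom_le {m : ℕ} (f : Fin (m + 1) → Fin (m + 1)) (a : Fin m)
    (hpos : ∀ c : ℕ, c < (f a.succ : ℕ) → ∃ b : Fin m, (f b.succ : ℕ) = c) :
    domIndex f a.succ ≤ (a : ℕ) := by
  classical
  unfold domIndex
  have := Finset.card_le_card_of_injOn
    (f := fun c : Fin (m + 1) =>
      if h : ∃ b : Fin m, (f b.succ : ℕ) = (c : ℕ) then (h.choose : ℕ) else 0)
    (s := univ.filter fun c : Fin (m + 1) => c < f a.succ ∧ ∀ b, f b = c → b < a.succ)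
    (t := Finset.range (a : ℕ)) ?_ ?_
  · simpa using this
  · intro c hc
    rw [Finset.mem_coe, Finset.mem_filter] at hc
    obtain ⟨-, hlt, hdom⟩ := hc
    dsimp only
    have hex := hpos (c : ℕ) (Fin.lt_def.1 hlt)
    rw [dif_pos hex]
    have hb := hex.choose_spec
    have : hex.choose.succ < a.succ := hdom _ (Fin.ext hb)
    rw [Finset.mem_coe, Finset.mem_range]
    exact Fin.lt_def.1 (Fin.succ_lt_succ_iff.1 this)
  · intro c1 hc1 c2 hc2 heq
    simp only [Finset.coe_filter, Set.mem_setOf_eq] at hc1 hc2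
    dsimp only at heq
    have hex1 := hpos (c1 : ℕ) (Fin.lt_def.1 hc1.2.1)
    have hex2 := hpos (c2 : ℕ) (Fin.lt_def.1 hc2.2.1)
    rw [dif_pos hex1, dif_pos hex2] at heq
    have hb1 := hex1.choose_spec
    have hb2 := hex2.choose_spec
    have hcc : hex1.choose = hex2.choose := Fin.ext heq
    apply Fin.ext
    rw [← hb1, ← hb2, hcc]

end Dom
section Main

variable {m : ℕ} {k : List ℕ} {j c0 : ℕ}

/-- no label other than 0 lies in column c0 -/
lemma hne_of (f : Fin (m + 1) → Fin (m + 1))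
    (hh : colHeights f = k) (hf0 : (f 0 : ℕ) = j) (hc0len : c0 < m + 1)
    (hcase : (j = c0 ∧ k.getD c0 0 = 1) ∨ (j ≠ c0 ∧ k.getD c0 0 = 0)) :
    ∀ a : Fin m, (f a.succ : ℕ) ≠ c0 := by
  intro a heq
  have hfib : (univ.filter fun b : Fin (m + 1) => (f b : ℕ) = c0).card = k.getD c0 0 := by
    rw [← hh, aux_colHeights_getD f c0 hc0len]
  rcases hcase with ⟨hj, hk1⟩ | ⟨hj, hk0⟩
  · have hsub : ({0, a.succ} : Finset (Fin (m + 1)))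
        ⊆ univ.filter fun b : Fin (m + 1) => (f b : ℕ) = c0 := by
      intro b hb
      rw [Finset.mem_insert, Finset.mem_singleton] at hb
      rcases hb with rfl | rfl
      · simp only [Finset.mem_filter, Finset.mem_univ, true_and]
        rw [hf0, hj]
      · simp only [Finset.mem_filter, Finset.mem_univ, true_and]
        exact heq
    have hcard2 : ({0, a.succ} : Finset (Fin (m + 1))).card = 2 := by
      rw [Finset.card_insert_of_notMem (by simp [(Fin.succ_ne_zero a).symm]),
        Finset.card_singleton]
    have := Finset.card_le_card hsub
    rw [hfib, hk1, hcard2] at this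
    omega
  · have : a.succ ∈ univ.filter fun b : Fin (m + 1) => (f b : ℕ) = c0 := by
      simp only [Finset.mem_filter, Finset.mem_univ, true_and]
      exact heq
    have := Finset.card_pos.2 ⟨_, this⟩
    rw [hfib, hk0] at this
    omega

lemma forward_ok (hm : 0 < m) (hc0 : c0 ≤ m) (hjc0 : j ≤ c0)
    (hlen : k.length = m + 1)
    (hkj : k.getD j 0 ≠ 0)
    (hk'pos : ∀ c, c < c0 → (k.set j (k.getD j 0 - 1)).getD c 0 ≠ 0)
    (hk'c0 : (k.set j (k.getD j 0 - 1)).getD c0 0 = 0)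
    (hkt : ktilde k j = (k.set j (k.getD j 0 - 1)).eraseIdx c0)
    (f : Fin (m + 1) → Fin (m + 1))
    (hf : IsCPF (m + 1) f) (hh : colHeights f = k) (hf0 : (f 0 : ℕ) = j)
    (hne : ∀ a : Fin m, (f a.succ : ℕ) ≠ c0) :
    IsCPF m (fwdF c0 f) ∧ colHeights (fwdF c0 f) = ktilde k j := by
  classical
  have hjlen : j < k.length := by omega
  have hgetset : ∀ c, (k.set j (k.getD j 0 - 1)).getD c 0
      = if c = j then k.getD j 0 - 1 else k.getD c 0 := fun c => aux_getD_set k j c _ hjlen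
  have hk'len : (k.set j (k.getD j 0 - 1)).length = m + 1 := by
    rw [List.length_set, hlen]
  have hktget : ∀ c, c < m → (ktilde k j).getD c 0
      = if c < c0 then (k.set j (k.getD j 0 - 1)).getD c 0
        else (k.set j (k.getD j 0 - 1)).getD (c + 1) 0 := by
    intro c hc
    rw [hkt, List.getD_eq_getElem _ _ (by rw [List.length_eraseIdx_of_lt (by rw [hk'len]; omega), hk'len]; omega),
      List.getElem_eraseIdx]
    split_ifs with h1
    · exact (List.getD_eq_getElem _ 0 (by omega)).symm
    all_goals exact (List.getD_eq_getElem _ 0 (by omega)).symm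
  have hrel : ReL c0 j f (fwdF c0 f) := rel_fwd hc0 hne hf0
  set g := fwdF c0 f with hgdef
  have hfib : ∀ c : ℕ, c < m + 1 →
      (univ.filter fun b : Fin (m + 1) => (f b : ℕ) = c).card = k.getD c 0 := by
    intro c hc
    rw [← hh, aux_colHeights_getD f c hc]
  have hgfib : ∀ c : ℕ, c < m →
      (univ.filter fun a : Fin m => (g a : ℕ) = c).card = (ktilde k j).getD c 0 := by
    intro c hc
    rcases lt_or_ge c c0 with hlt | hge
    · have hfb := hrel.fiber (c := c) (by omega)
      rw [if_pos hlt] at hfb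
      rw [hfib c (by omega)] at hfb
      rw [hktget c hc, if_pos hlt, hgetset]
      by_cases hcj : c = j
      · rw [if_pos hcj, ← hcj]
        rw [← hcj] at hfb
        rw [if_pos rfl] at hfb
        omega
      · rw [if_neg hcj]
        rw [if_neg (fun h => hcj h.symm)] at hfb
        omega
    · have hfb := hrel.fiber (c := c + 1) (by omega)
      rw [if_neg (by omega)] at hfb
      simp only [Nat.add_sub_cancel] at hfb
      rw [hfib (c + 1) (by omega)] at hfb
      rw [hktget c hc, if_neg (by omega), hgetset]
      have hj1 : j ≠ c + 1 := by omega
      rw [if_neg (by omega)] at hfb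
      rw [if_neg (Ne.symm hj1)]
      omega
  refine ⟨⟨?_, ?_⟩, ?_⟩
  · -- parking
    intro i hi
    rcases le_or_gt i c0 with hic | hic
    · rw [aux_card_lt_eq_sum]
      have hone : ∀ c ∈ Finset.range i, 1 ≤ (univ.filter fun x : Fin m => (g x : ℕ) = c).card := by
        intro c hcr
        rw [Finset.mem_range] at hcr
        rw [hgfib c (by omega)]
        rw [hktget c (by omega), if_pos (by omega)]
        have := hk'pos c (by omega)
        omega
      have := Finset.card_nsmul_le_sum (Finset.range i)
        (fun c => (univ.filter fun x : Fin m => (g x : ℕ) = c).card) 1 hone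
      simpa using this
    · have hcount := hrel.count (i + 1)
      rw [if_pos (by omega), if_neg (by omega)] at hcount
      simp only [Nat.add_sub_cancel] at hcount
      have hpark := hf.1 (i + 1) (by omega)
      omega
  · -- dominance
    intro a
    have hd := hrel.dom hc0 a
    have hb := hf.2 a.succ
    rw [Fin.val_succ] at hb
    rcases lt_or_ge c0 (f a.succ : ℕ) with hlt | hge
    · rw [if_pos hlt] at hd
      omega
    · have hlt2 : (f a.succ : ℕ) < c0 := by have := hne a; omega
      have hple := aux_dom_le f a (fun c hcf => by
        have hc0c : c < c0 := by omega
        have hcard := hgfib c (by omega)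
        have hkpos : (ktilde k j).getD c 0 ≠ 0 := by
          rw [hktget c (by omega), if_pos hc0c]
          exact hk'pos c hc0c
        have hpos' : 0 < (univ.filter fun x : Fin m => (g x : ℕ) = c).card := by omega
        obtain ⟨a', ha'⟩ := Finset.card_pos.1 hpos'
        rw [Finset.mem_filter] at ha'
        refine ⟨a', ?_⟩
        rw [hrel.2 a', ha'.2, if_pos hc0c])
      rw [if_neg (by omega)] at hd
      omega
  · -- heights
    apply List.ext_getElem
    · rw [aux_colHeights_length, hkt, List.length_eraseIdx_of_lt (by rw [hk'len]; omega), hk'len]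
      omega
    · intro c h1 h2
      rw [aux_colHeights_length] at h1
      rw [← List.getD_eq_getElem _ 0 h2, ← List.getD_eq_getElem _ 0 (by rw [aux_colHeights_length]; exact h1),
        aux_colHeights_getD g c h1, hgfib c h1]

end Main
section Back

variable {m : ℕ} {k : List ℕ} {j c0 : ℕ}

lemma backward_ok (hm : 0 < m) (hc0 : c0 ≤ m) (hjc0 : j ≤ c0)
    (hlen : k.length = m + 1)
    (hkj : k.getD j 0 ≠ 0)
    (hk'pos : ∀ c, c < c0 → (k.set j (k.getD j 0 - 1)).getD c 0 ≠ 0)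
    (hk'c0 : (k.set j (k.getD j 0 - 1)).getD c0 0 = 0)
    (hkt : ktilde k j = (k.set j (k.getD j 0 - 1)).eraseIdx c0)
    (g : Fin m → Fin m) (hg : IsCPF m g) (hh : colHeights g = ktilde k j) :
    (IsCPF (m + 1) (bwdF c0 j g) ∧ colHeights (bwdF c0 j g) = k)
      ∧ ((bwdF c0 j g) 0 : ℕ) = j := by
  classical
  have hjlen : j < k.length := by omega
  have hgetset : ∀ c, (k.set j (k.getD j 0 - 1)).getD c 0
      = if c = j then k.getD j 0 - 1 else k.getD c 0 := fun c => aux_getD_set k j c _ hjlen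
  have hk'len : (k.set j (k.getD j 0 - 1)).length = m + 1 := by
    rw [List.length_set, hlen]
  have hktget : ∀ c, c < m → (ktilde k j).getD c 0
      = if c < c0 then (k.set j (k.getD j 0 - 1)).getD c 0
        else (k.set j (k.getD j 0 - 1)).getD (c + 1) 0 := by
    intro c hc
    rw [hkt, List.getD_eq_getElem _ _ (by rw [List.length_eraseIdx_of_lt (by rw [hk'len]; omega), hk'len]; omega),
      List.getElem_eraseIdx]
    split_ifs with h1
    · exact (List.getD_eq_getElem _ 0 (by omega)).symm
    all_goals exact (List.getD_eq_getElem _ 0 (by omega)).symm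
  set f := bwdF c0 j g with hfdef
  have hrel : ReL c0 j f g := rel_bwd (by omega) g
  have hf0 : (f 0 : ℕ) = j := hrel.1
  have hgfib : ∀ c : ℕ, c < m →
      (univ.filter fun a : Fin m => (g a : ℕ) = c).card = (ktilde k j).getD c 0 := by
    intro c hc
    rw [← hh, aux_colHeights_getD g c hc]
  have hffib : ∀ c : ℕ, c < m + 1 →
      (univ.filter fun b : Fin (m + 1) => (f b : ℕ) = c).card = k.getD c 0 := by
    intro c hc
    rcases eq_or_ne c c0 with heq | hnec
    · subst heq
      rw [hrel.fiber_c0]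
      have hgs := hgetset c
      by_cases hjc : j = c
      · rw [if_pos hjc, ← hjc]
        rw [if_pos hjc.symm] at hgs
        omega
      · rw [if_neg hjc]
        rw [if_neg (fun h => hjc h.symm)] at hgs
        omega
    · have hfb := hrel.fiber (c := c) hnec
      rw [hfb]
      rcases lt_or_ge c c0 with hlt | hge
      · rw [if_pos hlt, hgfib c (by omega), hktget c (by omega), if_pos hlt, hgetset]
        by_cases hjc : j = c
        · rw [if_pos hjc, if_pos hjc.symm, ← hjc]
          omega
        · rw [if_neg hjc, if_neg (fun h => hjc h.symm)]
          omega
      · have hgt : c0 < c := by omega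
        simp only [if_neg (show ¬ c < c0 by omega), if_neg (show ¬ j = c by omega)]
        have hc1 : c - 1 < m := by omega
        rw [hgfib (c - 1) hc1, hktget (c - 1) hc1, if_neg (by omega)]
        have hcc : c - 1 + 1 = c := by omega
        rw [hcc, hgetset, if_neg (by omega)]
        omega
  refine ⟨⟨⟨?_, ?_⟩, ?_⟩, hf0⟩
  · -- parking
    intro i hi
    have hcount := hrel.count i
    rcases le_or_gt i c0 with hic | hic
    · rw [if_pos hic] at hcount
      have := hg.1 i (by omega)
      split_ifs at hcount <;> omega
    · rw [if_pos (by omega : j < i), if_neg (by omega)] at hcount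
      have := hg.1 (i - 1) (by omega)
      omega
  · -- dominance
    intro b
    induction b using Fin.cases with
    | zero =>
      have hempty : (univ.filter fun c : Fin (m + 1) => c < f 0 ∧ ∀ b, f b = c → b < 0) = ∅ := by
        refine Finset.eq_empty_of_forall_notMem fun c hc => ?_
        rw [Finset.mem_filter] at hc
        obtain ⟨-, hlt, hdom⟩ := hc
        have hcj : (c : ℕ) < j := by
          have := Fin.lt_def.1 hlt
          omega
        have hcc0 : (c : ℕ) < c0 := by omega
        have hcard := hgfib (c : ℕ) (by omega)
        have hkpos : (ktilde k j).getD (c : ℕ) 0 ≠ 0 := by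
          rw [hktget (c : ℕ) (by omega), if_pos hcc0]
          exact hk'pos (c : ℕ) hcc0
        have hpos' : 0 < (univ.filter fun x : Fin m => (g x : ℕ) = (c : ℕ)).card := by omega
        obtain ⟨a', ha'⟩ := Finset.card_pos.1 hpos'
        rw [Finset.mem_filter] at ha'
        have hfc : f a'.succ = c := by
          apply Fin.ext
          rw [hrel.2 a', ha'.2, if_pos hcc0]
        exact absurd (hdom a'.succ hfc) (Fin.not_lt_zero _)
      show domIndex f 0 < _
      unfold domIndex
      rw [hempty]
      simp
    | succ a =>
      have hd := hrel.dom hc0 a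
      have hb := hg.2 a
      show domIndex f a.succ < _
      rw [Fin.val_succ]
      split_ifs at hd <;> omega
  · -- heights
    apply List.ext_getElem
    · rw [aux_colHeights_length, hlen]
    · intro c h1 h2
      rw [aux_colHeights_length] at h1
      rw [← List.getD_eq_getElem _ 0 h2,
        ← List.getD_eq_getElem _ 0 (by rw [aux_colHeights_length]; exact h1),
        aux_colHeights_getD f c h1, hffib c h1]

end Back
section Step

open Classical in
lemma stepj {m : ℕ} (hm : 0 < m) (k : List ℕ) (hlen : k.length = m + 1)
    (hsum : k.sum = m + 1) (j : ℕ) (hj : j < k.idxOf 0) :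
    (univ.filter fun f : Fin (m + 1) → Fin (m + 1) =>
        (IsCPF (m + 1) f ∧ colHeights f = k) ∧ (f 0 : ℕ) = j).card
      = (univ.filter fun g : Fin m → Fin m =>
          IsCPF m g ∧ colHeights g = ktilde k j).card := by
  classical
  have hjlen : j < k.length := lt_of_lt_of_le hj List.idxOf_le_length
  have hkj : k.getD j 0 ≠ 0 := aux_getD_ne_zero hj hjlen
  set k' := k.set j (k.getD j 0 - 1) with hk'def
  have hk'len : k'.length = m + 1 := by rw [hk'def, List.length_set, hlen]
  have hgetset : ∀ c, k'.getD c 0 = if c = j then k.getD j 0 - 1 else k.getD c 0 :=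
    fun c => aux_getD_set k j c _ hjlen
  have h0mem : (0 : ℕ) ∈ k' := by
    by_cases hkj1 : k.getD j 0 = 1
    · have hjl : j < k'.length := by omega
      have h1 : k'[j] = 0 := by
        rw [← List.getD_eq_getElem _ 0 hjl, hgetset, if_pos rfl, hkj1]
      exact h1 ▸ List.getElem_mem hjl
    · have h0k : (0 : ℕ) ∈ k := by
        by_contra h0k
        have hpos : ∀ y ∈ k, y ≠ 0 := fun y hy h => h0k (h ▸ hy)
        have hx : k.getD j 0 ∈ k := by
          rw [List.getD_eq_getElem _ _ hjlen]
          exact List.getElem_mem hjlen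
        have := aux_length_lt_sum k hpos _ hx (by omega)
        omega
      have hi0 : k.idxOf 0 < k.length := List.idxOf_lt_length_iff.2 h0k
      have hieq : k[k.idxOf 0] = 0 := List.getElem_idxOf hi0
      have hij : j ≠ k.idxOf 0 := by omega
      have h2 : k'.getD (k.idxOf 0) 0 = 0 := by
        rw [hgetset, if_neg (fun h => hij h.symm), List.getD_eq_getElem _ _ hi0]
        exact hieq
      rw [List.getD_eq_getElem _ _ (by omega)] at h2
      exact h2 ▸ List.getElem_mem (by omega)
  set c0 := k'.idxOf 0 with hc0def
  have hc0len : c0 < m + 1 := hk'len ▸ List.idxOf_lt_length_iff.2 h0mem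
  have hc0 : c0 ≤ m := by omega
  have hk'c0 : k'.getD c0 0 = 0 := by
    rw [List.getD_eq_getElem _ _ (by omega)]
    exact List.getElem_idxOf (by omega)
  have hk'pos : ∀ c, c < c0 → k'.getD c 0 ≠ 0 := fun c hcc =>
    aux_getD_ne_zero hcc (by omega)
  have hjc0 : j ≤ c0 := by
    by_contra hcon
    push_neg at hcon
    have h1 : k.getD c0 0 = 0 := by
      have := hgetset c0
      rw [if_neg (by omega)] at this
      omega
    have := aux_indexOf_zero_le k c0 (by omega) h1
    omega
  have hkt : ktilde k j = k'.eraseIdx c0 := by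
    rw [ktilde, hc0def, hk'def]
    exact List.erase_eq_eraseIdx_of_idxOf rfl
  have hcase : (j = c0 ∧ k.getD c0 0 = 1) ∨ (j ≠ c0 ∧ k.getD c0 0 = 0) := by
    by_cases hjc : j = c0
    · left
      refine ⟨hjc, ?_⟩
      have h1 := hgetset c0
      rw [if_pos hjc.symm] at h1
      rw [← hjc]
      omega
    · right
      refine ⟨hjc, ?_⟩
      have h1 := hgetset c0
      rw [if_neg (fun h => hjc h.symm)] at h1
      omega
  refine Finset.card_bij' (i := fun f _ => fwdF c0 f) (j := fun g _ => bwdF c0 j g)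
    ?_ ?_ ?_ ?_
  · intro f hf
    rw [Finset.mem_filter] at hf ⊢
    obtain ⟨-, ⟨hcpf, hh⟩, hf0⟩ := hf
    have hne := hne_of f hh hf0 hc0len hcase
    exact ⟨Finset.mem_univ _,
      forward_ok hm hc0 hjc0 hlen hkj hk'pos hk'c0 hkt f hcpf hh hf0 hne⟩
  · intro g hg
    rw [Finset.mem_filter] at hg ⊢
    obtain ⟨-, hcpf, hh⟩ := hg
    obtain ⟨⟨h1, h2⟩, h3⟩ :=
      backward_ok hm hc0 hjc0 hlen hkj hk'pos hk'c0 hkt g hcpf hh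
    exact ⟨Finset.mem_univ _, ⟨h1, h2⟩, h3⟩
  · intro f hf
    rw [Finset.mem_filter] at hf
    obtain ⟨-, ⟨hcpf, hh⟩, hf0⟩ := hf
    have hne := hne_of f hh hf0 hc0len hcase
    exact (rel_fwd hc0 hne hf0).bwd_eq
  · intro g hg
    exact (rel_bwd (by omega) g).fwd_eq hc0

end Step

/-- Let n ≥ 2 and k ∈ Comp(n,n).  Then
|CPF(n,k)| = Σ_{j=1}^{i_k-1} |CPF(n-1,k̃_j)| (the sum written with 0-based j). -/
theorem statement9 (n : ℕ) (hn : 2 ≤ n) (k : List ℕ)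
    (hlen : k.length = n) (hsum : k.sum = n) :
    cpfCountWith n k =
      ∑ j ∈ Finset.range (k.idxOf 0), cpfCountWith (n - 1) (ktilde k j) := by
  classical
  obtain ⟨m, rfl⟩ : ∃ m, n = m + 1 := ⟨n - 1, by omega⟩
  have hm : 0 < m := by omega
  simp only [Nat.add_sub_cancel]
  have hcount : ∀ (M : ℕ) (l : List ℕ), cpfCountWith M l
      = (univ.filter fun f : Fin M → Fin M => IsCPF M f ∧ colHeights f = l).card := by
    intro M l
    rw [cpfCountWith, Nat.card_eq_fintype_card, Fintype.card_subtype]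
  rw [hcount]
  have hmaps : ∀ f ∈ (univ.filter fun f : Fin (m + 1) → Fin (m + 1) =>
      IsCPF (m + 1) f ∧ colHeights f = k),
      ((f 0 : ℕ)) ∈ Finset.range (k.idxOf 0) := by
    intro f hf
    rw [Finset.mem_filter] at hf
    obtain ⟨-, hcpf, hh⟩ := hf
    rw [Finset.mem_range]
    have hd0 := hcpf.2 0
    rw [Fin.val_zero] at hd0
    have hcol : ∀ c : ℕ, c ≤ (f 0 : ℕ) → k.getD c 0 ≠ 0 := by
      intro c hc
      have hcm : c < m + 1 := by have := (f 0).isLt; omega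
      rw [← hh, aux_colHeights_getD f c hcm]
      rcases eq_or_ne c (f 0 : ℕ) with heq | hne
      · have hmem : (0 : Fin (m + 1)) ∈ univ.filter
            fun b : Fin (m + 1) => (f b : ℕ) = c := by
          rw [Finset.mem_filter]
          exact ⟨Finset.mem_univ _, heq.symm⟩
        have := Finset.card_pos.2 ⟨_, hmem⟩
        omega
      · have hclt : c < (f 0 : ℕ) := by omega
        intro hzero
        rw [Finset.card_eq_zero] at hzero
        have hempty : ∀ b, f b ≠ (⟨c, hcm⟩ : Fin (m + 1)) := by
          intro b hb
          have : b ∈ univ.filter fun b : Fin (m + 1) => (f b : ℕ) = c := by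
            rw [Finset.mem_filter]
            exact ⟨Finset.mem_univ _, congrArg Fin.val hb⟩
          rw [hzero] at this
          exact absurd this (Finset.notMem_empty _)
        have hmem : (⟨c, hcm⟩ : Fin (m + 1)) ∈ univ.filter
            fun cc : Fin (m + 1) => cc < f 0 ∧ ∀ b, f b = cc → b < 0 := by
          rw [Finset.mem_filter]
          exact ⟨Finset.mem_univ _, Fin.lt_def.2 hclt,
            fun b hb => absurd hb (hempty b)⟩
        have := Finset.card_pos.2 ⟨_, hmem⟩
        unfold domIndex at hd0
        omega
    by_contra hcon
    push_neg at hcon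
    have hidx : k.idxOf 0 < k.length := by have := (f 0).isLt; omega
    have hval : k.getD (k.idxOf 0) 0 = 0 := by
      rw [List.getD_eq_getElem _ _ hidx]
      exact List.getElem_idxOf hidx
    exact hcol _ hcon hval
  rw [Finset.card_eq_sum_card_fiberwise hmaps]
  refine Finset.sum_congr rfl fun j hj => ?_
  rw [Finset.mem_range] at hj
  rw [hcount, Finset.filter_filter]
  have hstep := stepj hm k hlen hsum j hj
  convert hstep using 2
end

section
/- For all n ≥ 2 and all 2 ≤ i ≤ n+1, the generating functions of asymmetric multinomial coefficients satisfy F_{n,i}(x_1,…,x_n) = Σ_{j=1}^{i−1} x_j·F_{n−1,i−1}(X∖x_j) + (x_1+⋯+x_{i−1})·Σ_{ℓ=i}^{n} F_{n−1,ℓ}(X∖x_i), with initial condition F_{1,2}(x_1)=x_1 (when i=n+1 the second sum is empty and the term is 0). Moreover F_n = Σ_{i=2}^{n+1} F_{n,i}. -/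
open Finset

/-- The order-preserving embedding `Fin m → Fin (m+1)` skipping the (0-based) index `t`:
used to express evaluation of a polynomial in m variables at `X ∖ x_{t+1}`. -/
def skip (m t : ℕ) : Fin m → Fin (m + 1) := fun p =>
  if (p : ℕ) < t then p.castSucc else p.succ

/-- F_{n,i}(x_1,…,x_n) = Σ_{k ∈ Comp(n,n,i)} ⟨⟨n;k⟩⟩ x_1^{k_1}⋯x_n^{k_n},
where Comp(n,n,i) is the set of k ∈ Comp(n,n) with i_k = i. -/
noncomputable def Fni (n i : ℕ) : MvPolynomial (Fin n) ℤ :=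
  ∑ v ∈ (Finset.Nat.antidiagonalTuple n n).filter
      (fun v => (List.ofFn v).idxOf 0 + 1 = i),
    MvPolynomial.C (amc n (List.ofFn v) : ℤ) * ∏ t : Fin n, MvPolynomial.X t ^ v t

/-- F_n(x_1,…,x_n) = Σ_{k ∈ Comp(n,n)} ⟨⟨n;k⟩⟩ x_1^{k_1}⋯x_n^{k_n}. -/
noncomputable def Fpoly (n : ℕ) : MvPolynomial (Fin n) ℤ :=
  ∑ v ∈ Finset.Nat.antidiagonalTuple n n,
    MvPolynomial.C (amc n (List.ofFn v) : ℤ) * ∏ t : Fin n, MvPolynomial.X t ^ v t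

set_option linter.unusedVariables false in
section
namespace Aux

lemma skip_eq_succAbove {m t : ℕ} (ht : t < m + 1) :
    skip m t = (⟨t, ht⟩ : Fin (m + 1)).succAbove := by
  funext p
  simp only [skip, Fin.succAbove, Fin.lt_def, Fin.coe_castSucc]

lemma val_succAbove {m : ℕ} (t : Fin (m + 1)) (s : Fin m) :
    (t.succAbove s : ℕ) = if (s : ℕ) < (t : ℕ) then (s : ℕ) else (s : ℕ) + 1 := by
  rw [Fin.succAbove]
  split_ifs with h1 h2 h3 <;> simp_all [Fin.lt_def]

lemma indexOf_ofFn_le {n : ℕ} (v : Fin n → ℕ) : (List.ofFn v).idxOf 0 ≤ n := by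
  simpa using List.idxOf_le_length (a := 0) (l := List.ofFn v)

lemma ne_zero_of_lt_indexOf {n : ℕ} {v : Fin n → ℕ} {q : Fin n}
    (h : (q : ℕ) < (List.ofFn v).idxOf 0) : v q ≠ 0 := by
  have := List.not_of_lt_findIdx (p := (· == (0:ℕ))) (xs := List.ofFn v) (i := q) h
  simpa using this

lemma eq_zero_of_indexOf_lt {n : ℕ} {v : Fin n → ℕ} {p : ℕ}
    (hp : (List.ofFn v).idxOf 0 = p) (h : p < n) : v ⟨p, h⟩ = 0 := by
  subst hp
  have hl : (List.ofFn v).idxOf 0 < (List.ofFn v).length := by simpa using h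
  have h2 := List.getElem_idxOf hl
  rw [List.getElem_ofFn] at h2
  exact h2

lemma indexOf_ofFn_eq {n : ℕ} (v : Fin n → ℕ) {p : ℕ} (hp : p ≤ n)
    (h1 : ∀ q : Fin n, (q : ℕ) < p → v q ≠ 0) (h2 : ∀ h : p < n, v ⟨p, h⟩ = 0) :
    (List.ofFn v).idxOf 0 = p := by
  rcases lt_or_eq_of_le hp with h | h
  · have hlen : p < (List.ofFn v).length := by simpa using h
    have : List.findIdx (· == (0:ℕ)) (List.ofFn v) = p := by
      rw [List.findIdx_eq hlen]
      constructor
      · simp [h2 h]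
      · intro j hj
        have hjn : j < n := lt_trans hj h
        have := h1 ⟨j, hjn⟩ hj
        simp [this]
    exact this
  · subst h
    have h0 : (0:ℕ) ∉ List.ofFn v := by
      simp only [List.mem_ofFn, Set.mem_range, not_exists]
      intro q hq
      exact h1 q q.isLt hq
    simpa using List.idxOf_eq_length h0

lemma erase_zero_eq (l : List ℕ) : l.erase 0 = l.eraseIdx (l.idxOf 0) := by
  induction l with
  | nil => rfl
  | cons a l ih =>
    by_cases h : a = 0
    · subst h
      rw [List.idxOf_cons_self]
      simp [List.erase_cons]
    · rw [List.idxOf_cons_ne _ h]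
      simp only [List.erase_cons, List.eraseIdx_cons_succ]
      rw [if_neg (by simpa using h), ih]

lemma eraseIdx_ofFn {m : ℕ} (v : Fin (m + 1) → ℕ) (t : Fin (m + 1)) :
    (List.ofFn v).eraseIdx (t : ℕ) = List.ofFn (fun s : Fin m => v (t.succAbove s)) := by
  apply List.ext_getElem
  · simp [List.length_eraseIdx, t.isLt]
  · intro i h1 h2
    have hil : i < m := by simpa using h2
    rw [List.getElem_eraseIdx]
    split_ifs with h <;>
      (rw [List.getElem_ofFn, List.getElem_ofFn]; congr 1; apply Fin.ext;
       rw [val_succAbove]; simp [h])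

lemma set_ofFn {n : ℕ} (v : Fin n → ℕ) (t : Fin n) (x : ℕ) :
    (List.ofFn v).set (t : ℕ) x = List.ofFn (Function.update v t x) := by
  apply List.ext_getElem
  · simp
  · intro i hi1 hi2
    have hin : i < n := by simpa using hi2
    simp only [List.getElem_set, List.getElem_ofFn, Function.update_apply]
    split_ifs with h h' h'
    · rfl
    · exact absurd (by apply Fin.ext; simpa using h.symm) h'
    · exact absurd (by simpa using (congrArg Fin.val h').symm) h
    · rfl

lemma getD_ofFn {n : ℕ} (v : Fin n → ℕ) (t : Fin n) :
    (List.ofFn v).getD (t : ℕ) 0 = v t := by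
  rw [List.getD_eq_getElem _ _ (by simpa using t.isLt), List.getElem_ofFn]

lemma amc_succ {m : ℕ} (hm : 1 ≤ m) (k : List ℕ) :
    amc (m + 1) k = ∑ j ∈ Finset.range (k.idxOf 0), amc m (ktilde k j) := by
  obtain ⟨m', rfl⟩ : ∃ m', m = m' + 1 := ⟨m - 1, by omega⟩
  rfl

lemma ktilde_eq_one {m : ℕ} (v : Fin (m + 1) → ℕ) (j : Fin (m + 1))
    (h1 : ∀ q : Fin (m + 1), (q : ℕ) < (j : ℕ) → v q ≠ 0) (hv : v j = 1) :
    ktilde (List.ofFn v) (j : ℕ) = List.ofFn (fun s : Fin m => v (j.succAbove s)) := by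
  unfold ktilde
  rw [getD_ofFn, hv, set_ofFn, erase_zero_eq]
  have hidx : (List.ofFn (Function.update v j (1 - 1))).idxOf 0 = (j : ℕ) := by
    apply indexOf_ofFn_eq _ (le_of_lt j.isLt)
    · intro q hq
      rw [Function.update_apply, if_neg (by intro e; rw [e] at hq; omega)]
      exact h1 q hq
    · intro h
      have he : (⟨(j : ℕ), h⟩ : Fin (m + 1)) = j := Fin.ext rfl
      rw [he, Function.update_self]
  rw [hidx, eraseIdx_ofFn]
  congr 1
  funext s
  rw [Function.update_apply, if_neg (Fin.succAbove_ne j s)]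

lemma ktilde_ge_two {m : ℕ} (v : Fin (m + 1) → ℕ) (j p : Fin (m + 1))
    (hjp : (j : ℕ) < (p : ℕ)) (hidx : (List.ofFn v).idxOf 0 = (p : ℕ)) (hv : 2 ≤ v j) :
    ktilde (List.ofFn v) (j : ℕ)
      = List.ofFn (fun s : Fin m => Function.update v j (v j - 1) (p.succAbove s)) := by
  unfold ktilde
  rw [getD_ofFn, set_ofFn, erase_zero_eq]
  have hidx2 : (List.ofFn (Function.update v j (v j - 1))).idxOf 0 = (p : ℕ) := by
    apply indexOf_ofFn_eq _ (le_of_lt p.isLt)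
    · intro q hq
      rw [Function.update_apply]
      split_ifs with h
      · omega
      · exact ne_zero_of_lt_indexOf (v := v) (q := q) (by rw [hidx]; exact hq)
    · intro h
      have he : (⟨(p : ℕ), h⟩ : Fin (m + 1)) = p := Fin.ext rfl
      rw [he, Function.update_apply, if_neg (by intro e; rw [e] at hjp; omega)]
      have := eq_zero_of_indexOf_lt hidx p.isLt
      rwa [Fin.eta] at this
  rw [hidx2, eraseIdx_ofFn]

lemma monomial_split {m : ℕ} (v : Fin (m + 1) → ℕ) (t : Fin (m + 1)) :
    (∏ s : Fin (m + 1), (MvPolynomial.X s : MvPolynomial (Fin (m + 1)) ℤ) ^ v s)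
      = MvPolynomial.X t ^ v t *
        MvPolynomial.rename t.succAbove
          (∏ s : Fin m, (MvPolynomial.X s : MvPolynomial (Fin m) ℤ) ^ v (t.succAbove s)) := by
  rw [Fin.prod_univ_succAbove
      (fun s => (MvPolynomial.X s : MvPolynomial (Fin (m + 1)) ℤ) ^ v s) t, map_prod]
  simp [MvPolynomial.rename_X]

lemma sum_filter_fin {M : Type*} [AddCommMonoid M] {m p : ℕ} (hp : p ≤ m + 1) (f : ℕ → M) :
    ∑ j ∈ Finset.univ.filter (fun j : Fin (m + 1) => (j : ℕ) < p), f (j : ℕ)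
      = ∑ q ∈ Finset.range p, f q := by
  rw [Finset.sum_filter, Fin.sum_univ_eq_sum_range (fun q => if q < p then f q else 0) (m + 1),
    ← Finset.sum_filter]
  congr 1
  ext a
  simp only [Finset.mem_filter, Finset.mem_range]
  omega

open MvPolynomial in
lemma claim1 {m : ℕ} {p : ℕ} (hp1 : 1 ≤ p) (hp2 : p ≤ m + 1)
    (j : Fin (m + 1)) (hj : (j : ℕ) < p) :
    ∑ v ∈ (Finset.Nat.antidiagonalTuple (m + 1) (m + 1)).filter
        (fun v => (List.ofFn v).idxOf 0 = p ∧ v j = 1),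
      (MvPolynomial.C (amc m (ktilde (List.ofFn v) (j : ℕ)) : ℤ)
        * ∏ t : Fin (m + 1), MvPolynomial.X t ^ v t)
      = MvPolynomial.X j * MvPolynomial.rename j.succAbove
          (∑ w ∈ (Finset.Nat.antidiagonalTuple m m).filter
              (fun w => (List.ofFn w).idxOf 0 + 1 = p),
            MvPolynomial.C (amc m (List.ofFn w) : ℤ) * ∏ t : Fin m, MvPolynomial.X t ^ w t) := by
  classical
  rw [map_sum, Finset.mul_sum]
  refine Finset.sum_nbij' (fun v => fun s => v (j.succAbove s)) (fun w => j.insertNth 1 w)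
    ?_ ?_ ?_ ?_ ?_
  · -- forward membership
    intro v hv
    beta_reduce
    rw [Finset.mem_filter] at hv ⊢
    have hsum := Finset.Nat.mem_antidiagonalTuple.mp hv.1
    have hidx := hv.2.1
    have hv1 := hv.2.2
    have hsplit := Fin.sum_univ_succAbove v j
    rw [hv1] at hsplit
    constructor
    · rw [Finset.Nat.mem_antidiagonalTuple]
      omega
    · have : (List.ofFn fun s => v (j.succAbove s)).idxOf 0 = p - 1 := by
        apply indexOf_ofFn_eq _ (by omega)
        · intro q hq
          apply ne_zero_of_lt_indexOf (v := v)
          rw [hidx, val_succAbove]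
          split_ifs with h <;> omega
        · intro h
          have he : j.succAbove ⟨p - 1, h⟩ = ⟨p, by omega⟩ := by
            apply Fin.ext
            rw [val_succAbove]
            simp only
            split_ifs with h2 <;> omega
          rw [he]
          exact eq_zero_of_indexOf_lt hidx (by omega)
      omega
  · -- backward membership
    intro w hw
    beta_reduce
    rw [Finset.mem_filter] at hw ⊢
    obtain ⟨hsum, hidx⟩ := hw
    rw [Finset.Nat.mem_antidiagonalTuple] at hsum
    have hsplit := Fin.sum_univ_succAbove (j.insertNth 1 w) j
    rw [Fin.insertNth_apply_same] at hsplit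
    have hrest : ∀ s : Fin m, j.insertNth (α := fun _ => ℕ) 1 w (j.succAbove s) = w s :=
      fun s => Fin.insertNth_apply_succAbove (α := fun _ => ℕ) j 1 w s
    refine ⟨?_, ?_, Fin.insertNth_apply_same (α := fun _ => ℕ) j 1 w⟩
    · rw [Finset.Nat.mem_antidiagonalTuple, hsplit]
      rw [Finset.sum_congr rfl (fun s _ => hrest s), hsum]
      omega
    · apply indexOf_ofFn_eq _ hp2
      · intro q hq
        by_cases hqj : q = j
        · subst hqj
          rw [Fin.insertNth_apply_same]
          exact one_ne_zero
        · obtain ⟨s, hs⟩ := Fin.exists_succAbove_eq hqj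
          rw [← hs, hrest]
          apply ne_zero_of_lt_indexOf (v := w)
          have hval := val_succAbove j s
          rw [hs] at hval
          have : (s : ℕ) < p - 1 := by
            split_ifs at hval <;> omega
          omega
      · intro h
        have hne : (⟨p, h⟩ : Fin (m + 1)) ≠ j := by
          intro e
          have := congrArg Fin.val e
          simp at this
          omega
        obtain ⟨s, hs⟩ := Fin.exists_succAbove_eq hne
        rw [← hs, hrest]
        have hval := val_succAbove j s
        rw [hs] at hval
        simp only at hval
        have hsval : (s : ℕ) = p - 1 := by split_ifs at hval <;> omega
        have hz := eq_zero_of_indexOf_lt (v := w) (p := p - 1) (by omega) (by omega : p - 1 < m)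
        have : s = ⟨p - 1, by omega⟩ := Fin.ext hsval
        rw [this]
        exact hz
  · -- left inverse
    intro v hv
    rw [Finset.mem_filter] at hv
    have h1 : j.insertNth 1 (j.removeNth v) = Function.update v j 1 :=
      Fin.insertNth_removeNth j 1 v
    have h2 : j.removeNth v = fun s => v (j.succAbove s) := rfl
    show j.insertNth 1 (fun s => v (j.succAbove s)) = v
    rw [← h2, h1]
    have h3 := Function.update_eq_self j v
    rw [hv.2.2] at h3
    exact h3
  · -- right inverse
    intro w hw
    funext s
    show j.insertNth (α := fun _ => ℕ) 1 w (j.succAbove s) = w s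
    exact Fin.insertNth_apply_succAbove (α := fun _ => ℕ) j 1 w s
  · -- values
    intro v hv
    rw [Finset.mem_filter] at hv
    have hidx := hv.2.1
    have hv1 := hv.2.2
    have hk : ktilde (List.ofFn v) (j : ℕ) = List.ofFn (fun s => v (j.succAbove s)) := by
      apply ktilde_eq_one v j _ hv1
      intro q hq
      apply ne_zero_of_lt_indexOf (v := v)
      omega
    rw [hk, monomial_split v j, hv1, pow_one, map_mul, MvPolynomial.rename_C]
    ring

open MvPolynomial in
lemma claim2 {m : ℕ} {p : ℕ} (hp1 : 1 ≤ p) (hpm : p < m + 1)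
    (j : Fin (m + 1)) (hj : (j : ℕ) < p) :
    ∑ v ∈ (Finset.Nat.antidiagonalTuple (m + 1) (m + 1)).filter
        (fun v => (List.ofFn v).idxOf 0 = p ∧ ¬ v j = 1),
      (MvPolynomial.C (amc m (ktilde (List.ofFn v) (j : ℕ)) : ℤ)
        * ∏ t : Fin (m + 1), MvPolynomial.X t ^ v t)
      = MvPolynomial.X j * MvPolynomial.rename (⟨p, hpm⟩ : Fin (m + 1)).succAbove
          (∑ w ∈ (Finset.Nat.antidiagonalTuple m m).filter
              (fun w => p ≤ (List.ofFn w).idxOf 0),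
            MvPolynomial.C (amc m (List.ofFn w) : ℤ) * ∏ t : Fin m, MvPolynomial.X t ^ w t) := by
  classical
  set phat : Fin (m + 1) := ⟨p, hpm⟩ with hphat
  have hjphat : j ≠ phat := by
    intro e
    rw [e] at hj
    simp [hphat] at hj
  have hphatj : phat ≠ j := hjphat.symm
  rw [map_sum, Finset.mul_sum]
  refine Finset.sum_nbij'
    (fun v => fun s => Function.update v j (v j - 1) (phat.succAbove s))
    (fun w => Function.update (phat.insertNth (α := fun _ => ℕ) 0 w) j
      (phat.insertNth (α := fun _ => ℕ) 0 w j + 1))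
    ?_ ?_ ?_ ?_ ?_
  · -- forward membership
    intro v hv
    beta_reduce
    rw [Finset.mem_filter] at hv ⊢
    have hsum := Finset.Nat.mem_antidiagonalTuple.mp hv.1
    have hidx := hv.2.1
    have hvj : 2 ≤ v j := by
      have h0 : v j ≠ 0 := ne_zero_of_lt_indexOf (by omega)
      have h1 := hv.2.2
      omega
    have hvp : v phat = 0 := by
      have := eq_zero_of_indexOf_lt hidx hpm
      rwa [show (⟨p, hpm⟩ : Fin (m+1)) = phat from rfl] at this
    set v' := Function.update v j (v j - 1) with hv'
    have hv'p : v' phat = 0 := by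
      rw [hv', Function.update_apply, if_neg hphatj, hvp]
    have hv'j : v' j = v j - 1 := Function.update_self j _ v
    have hsum' : ∑ t, v' t = m := by
      have h1 : ∑ t, v' t = (v j - 1) + ∑ t ∈ Finset.univ \ {j}, v t :=
        Finset.sum_update_of_mem (Finset.mem_univ j) v (v j - 1)
      have h2 : v j + ∑ t ∈ Finset.univ \ {j}, v t = ∑ t, v t := by
        rw [Finset.sdiff_singleton_eq_erase]
        exact Finset.add_sum_erase _ v (Finset.mem_univ j)
      omega
    have hwsplit := Fin.sum_univ_succAbove v' phat
    have hwker : ∀ s : Fin m, (s : ℕ) < p → v' (phat.succAbove s) ≠ 0 := by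
      intro s hs
      rw [hv', Function.update_apply]
      split_ifs with h
      · omega
      · apply ne_zero_of_lt_indexOf (v := v)
        rw [hidx, val_succAbove]
        simp only [hphat]
        split_ifs <;> omega
    constructor
    · rw [Finset.Nat.mem_antidiagonalTuple]
      rw [hv'p] at hwsplit
      omega
    · by_contra hlt
      push_neg at hlt
      have hsm : (List.ofFn fun s => v' (phat.succAbove s)).idxOf 0 < m := by
        have := indexOf_ofFn_le (fun s => v' (phat.succAbove s))
        omega
      have := eq_zero_of_indexOf_lt (v := fun s => v' (phat.succAbove s)) rfl hsm
      have hlt2 : (List.ofFn fun s => v' (phat.succAbove s)).idxOf 0 < p := by omega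
      exact hwker ⟨_, hsm⟩ hlt2 this
  · -- backward membership
    intro w hw
    beta_reduce
    rw [Finset.mem_filter] at hw ⊢
    have hsum := Finset.Nat.mem_antidiagonalTuple.mp hw.1
    have hidxw := hw.2
    set u := phat.insertNth (α := fun _ => ℕ) 0 w with hu
    have hup : u phat = 0 := Fin.insertNth_apply_same (α := fun _ => ℕ) phat 0 w
    have hus : ∀ s : Fin m, u (phat.succAbove s) = w s :=
      fun s => Fin.insertNth_apply_succAbove (α := fun _ => ℕ) phat 0 w s
    have huq : ∀ q : Fin (m + 1), (q : ℕ) < p → u q ≠ 0 := by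
      intro q hq
      have hqp : q ≠ phat := by
        intro e
        rw [e] at hq
        simp [hphat] at hq
      obtain ⟨s, hs⟩ := Fin.exists_succAbove_eq hqp
      rw [← hs, hus]
      apply ne_zero_of_lt_indexOf (v := w)
      have hval := val_succAbove phat s
      rw [hs] at hval
      simp only [hphat] at hval
      have : (s : ℕ) < p := by split_ifs at hval <;> omega
      omega
    set v := Function.update u j (u j + 1) with hv
    have hvj : v j = u j + 1 := Function.update_self j _ u
    have hvq : ∀ q, q ≠ j → v q = u q := by
      intro q hq
      rw [hv, Function.update_apply, if_neg hq]
    have hsumu : ∑ t, u t = m := by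
      have h1 := Fin.sum_univ_succAbove u phat
      rw [hup, Finset.sum_congr rfl (fun s _ => hus s), hsum] at h1
      omega
    have hsumv : ∑ t, v t = m + 1 := by
      have h1 : ∑ t, v t = (u j + 1) + ∑ t ∈ Finset.univ \ {j}, u t :=
        Finset.sum_update_of_mem (Finset.mem_univ j) u (u j + 1)
      have h2 : u j + ∑ t ∈ Finset.univ \ {j}, u t = ∑ t, u t := by
        rw [Finset.sdiff_singleton_eq_erase]
        exact Finset.add_sum_erase _ u (Finset.mem_univ j)
      omega
    refine ⟨Finset.Nat.mem_antidiagonalTuple.mpr hsumv, ?_, ?_⟩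
    · apply indexOf_ofFn_eq _ (le_of_lt hpm)
      · intro q hq
        by_cases hqj : q = j
        · subst hqj
          rw [hvj]
          omega
        · rw [hvq q hqj]
          exact huq q hq
      · intro h
        have he : (⟨p, h⟩ : Fin (m + 1)) = phat := rfl
        rw [he, hvq phat hphatj, hup]
    · rw [hvj]
      have : u j ≠ 0 := huq j hj
      omega
  · -- left inverse
    intro v hv
    rw [Finset.mem_filter] at hv
    have hidx := hv.2.1
    have hvj : 2 ≤ v j := by
      have h0 : v j ≠ 0 := ne_zero_of_lt_indexOf (by omega)
      have h1 := hv.2.2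
      omega
    have hvp : v phat = 0 := by
      have := eq_zero_of_indexOf_lt hidx hpm
      rwa [show (⟨p, hpm⟩ : Fin (m+1)) = phat from rfl] at this
    set v' := Function.update v j (v j - 1) with hv'
    have hins : phat.insertNth (α := fun _ => ℕ) 0
        (fun s => v' (phat.succAbove s)) = v' := by
      have h1 : phat.insertNth (α := fun _ => ℕ) 0 (phat.removeNth v')
          = Function.update v' phat 0 := Fin.insertNth_removeNth phat 0 v'
      have h2 : phat.removeNth v' = fun s => v' (phat.succAbove s) := rfl
      rw [← h2, h1]
      have h3 := Function.update_eq_self phat v'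
      have h4 : v' phat = 0 := by
        rw [hv', Function.update_apply, if_neg hphatj, hvp]
      rw [h4] at h3
      exact h3
    show Function.update _ j _ = v
    rw [hins]
    have h5 : v' j = v j - 1 := Function.update_self j _ v
    rw [h5, hv', Function.update_idem]
    have h6 : v j - 1 + 1 = v j := by omega
    rw [h6, Function.update_eq_self]
  · -- right inverse
    intro w hw
    rw [Finset.mem_filter] at hw
    set u := phat.insertNth (α := fun _ => ℕ) 0 w with hu
    have hus : ∀ s : Fin m, u (phat.succAbove s) = w s :=
      fun s => Fin.insertNth_apply_succAbove (α := fun _ => ℕ) phat 0 w s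
    funext s
    show Function.update (Function.update u j (u j + 1)) j
        (Function.update u j (u j + 1) j - 1) (phat.succAbove s) = w s
    rw [Function.update_idem, Function.update_self]
    have : u j + 1 - 1 = u j := by omega
    rw [this, Function.update_eq_self]
    exact hus s
  · -- values
    intro v hv
    beta_reduce
    rw [Finset.mem_filter] at hv
    have hidx := hv.2.1
    have hvj : 2 ≤ v j := by
      have h0 : v j ≠ 0 := ne_zero_of_lt_indexOf (by omega)
      have h1 := hv.2.2
      omega
    have hvp : v phat = 0 := by
      have := eq_zero_of_indexOf_lt hidx hpm
      rwa [show (⟨p, hpm⟩ : Fin (m+1)) = phat from rfl] at this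
    set v' := Function.update v j (v j - 1) with hv'
    have hk : ktilde (List.ofFn v) (j : ℕ)
        = List.ofFn (fun s => v' (phat.succAbove s)) := by
      apply ktilde_ge_two v j phat (by simp [hphat]; omega) _ hvj
      rw [hidx]
    rw [hk]
    have hv'p : v' phat = 0 := by
      rw [hv', Function.update_apply, if_neg hphatj, hvp]
    have hMv' : (∏ t : Fin (m + 1), (X t : MvPolynomial (Fin (m + 1)) ℤ) ^ v' t)
        = rename phat.succAbove
            (∏ s : Fin m, (X s : MvPolynomial (Fin m) ℤ) ^ v' (phat.succAbove s)) := by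
      rw [monomial_split v' phat, hv'p, pow_zero, one_mul]
    have hMv : (∏ t : Fin (m + 1), (X t : MvPolynomial (Fin (m + 1)) ℤ) ^ v t)
        = X j * ∏ t : Fin (m + 1), (X t : MvPolynomial (Fin (m + 1)) ℤ) ^ v' t := by
      rw [Fin.prod_univ_succAbove (fun t => (X t : MvPolynomial (Fin (m + 1)) ℤ) ^ v t) j,
        Fin.prod_univ_succAbove (fun t => (X t : MvPolynomial (Fin (m + 1)) ℤ) ^ v' t) j]
      have h1 : v' j = v j - 1 := Function.update_self j _ v
      have h2 : ∀ s : Fin m, v' (j.succAbove s) = v (j.succAbove s) := by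
        intro s
        rw [hv', Function.update_apply, if_neg (Fin.succAbove_ne j s)]
      have hR : (∏ s : Fin m, (X (j.succAbove s) : MvPolynomial (Fin (m + 1)) ℤ)
            ^ v' (j.succAbove s))
          = ∏ s : Fin m, (X (j.succAbove s) : MvPolynomial (Fin (m + 1)) ℤ)
            ^ v (j.succAbove s) :=
        Finset.prod_congr rfl (fun s _ => by rw [h2 s])
      rw [h1, hR]
      conv_lhs => rw [show v j = v j - 1 + 1 from by omega]
      rw [pow_succ]
      ring
    rw [hMv, hMv', map_mul, MvPolynomial.rename_C]
    ring

end Aux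
end

/-- For all n ≥ 2 (written n = m+1, m ≥ 1) and all 2 ≤ i ≤ n+1,
F_{n,i}(X) = Σ_{j=1}^{i-1} x_j·F_{n-1,i-1}(X∖x_j)
           + (x_1+⋯+x_{i-1})·Σ_{ℓ=i}^{n} F_{n-1,ℓ}(X∖x_i),
with initial condition F_{1,2}(x_1) = x_1; moreover F_n = Σ_{i=2}^{n+1} F_{n,i}.
(Variables are 0-based: x_j is `X ⟨j-1⟩`.) -/
theorem statement10 :
    Fni 1 2 = MvPolynomial.X 0 ∧
    (∀ m : ℕ, 1 ≤ m → ∀ i : ℕ, 2 ≤ i → i ≤ m + 2 →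
      Fni (m + 1) i =
        (∑ j ∈ Finset.univ.filter (fun j : Fin (m + 1) => (j : ℕ) < i - 1),
            MvPolynomial.X j * MvPolynomial.rename (skip m (j : ℕ)) (Fni m (i - 1))) +
        (∑ j ∈ Finset.univ.filter (fun j : Fin (m + 1) => (j : ℕ) < i - 1),
            MvPolynomial.X j) *
          ∑ ℓ ∈ Finset.Icc i (m + 1),
            MvPolynomial.rename (skip m (i - 1)) (Fni m ℓ)) ∧
    (∀ n : ℕ, 2 ≤ n → Fpoly n = ∑ i ∈ Finset.Icc 2 (n + 1), Fni n i) := by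
  classical
  refine ⟨?_, ?_, ?_⟩
  · -- Part 1 : Fni 1 2 = X 0
    have hset : Finset.Nat.antidiagonalTuple 1 1 = {fun _ : Fin 1 => 1} := by
      ext v
      simp only [Finset.Nat.mem_antidiagonalTuple, Fin.sum_univ_one, Finset.mem_singleton]
      constructor
      · intro h; funext t; rw [Subsingleton.elim t 0, h]
      · intro h; rw [h]
    unfold Fni
    rw [hset, Finset.filter_singleton, if_pos (by decide), Finset.sum_singleton]
    have h1 : amc 1 (List.ofFn (fun _ : Fin 1 => 1)) = 1 := by decide
    rw [h1, Fin.prod_univ_one]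
    simp
  · -- Part 2 : the recursion
    intro m hm i hi2 him
    obtain ⟨p, rfl⟩ : ∃ p, i = p + 1 := ⟨i - 1, by omega⟩
    have hp1 : 1 ≤ p := by omega
    have hpm : p ≤ m + 1 := by omega
    simp only [Nat.add_sub_cancel]
    unfold Fni
    have hstep1 : ∀ v ∈ (Finset.Nat.antidiagonalTuple (m + 1) (m + 1)).filter
        (fun v => (List.ofFn v).idxOf 0 + 1 = p + 1),
        (MvPolynomial.C (amc (m + 1) (List.ofFn v) : ℤ)
            * ∏ t : Fin (m + 1), MvPolynomial.X t ^ v t)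
          = ∑ q ∈ Finset.range p, MvPolynomial.C (amc m (ktilde (List.ofFn v) q) : ℤ)
              * ∏ t : Fin (m + 1), MvPolynomial.X t ^ v t := by
      intro v hv
      have hidx : (List.ofFn v).idxOf 0 = p := by
        have := (Finset.mem_filter.mp hv).2; omega
      rw [Aux.amc_succ hm, hidx, Nat.cast_sum, map_sum, Finset.sum_mul]
    rw [Finset.sum_congr rfl hstep1, Finset.sum_comm,
      ← Aux.sum_filter_fin hpm (fun q => ∑ v ∈ (Finset.Nat.antidiagonalTuple (m + 1) (m + 1)).filter
          (fun v => (List.ofFn v).idxOf 0 + 1 = p + 1),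
        MvPolynomial.C (amc m (ktilde (List.ofFn v) q) : ℤ)
          * ∏ t : Fin (m + 1), MvPolynomial.X t ^ v t),
      Finset.sum_mul, ← Finset.sum_add_distrib]
    apply Finset.sum_congr rfl
    intro j hjJ
    beta_reduce
    have hj : (j : ℕ) < p := by simpa using hjJ
    have hAeq : (Finset.Nat.antidiagonalTuple (m + 1) (m + 1)).filter
        (fun v => (List.ofFn v).idxOf 0 + 1 = p + 1)
        = (Finset.Nat.antidiagonalTuple (m + 1) (m + 1)).filter
          (fun v => (List.ofFn v).idxOf 0 = p) := by
      apply Finset.filter_congr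
      intro v _
      constructor <;> (intro h; omega)
    rw [hAeq, ← Finset.sum_filter_add_sum_filter_not _ (fun v => v j = 1),
      Finset.filter_filter, Finset.filter_filter]
    rw [Aux.skip_eq_succAbove (show (j : ℕ) < m + 1 by omega)]
    rcases lt_or_eq_of_le hpm with hpm' | hpm'
    · -- p ≤ m
      rw [Aux.skip_eq_succAbove hpm']
      congr 1
      · exact Aux.claim1 hp1 hpm j hj
      · have hfib := Finset.sum_fiberwise_eq_sum_filter
          (Finset.Nat.antidiagonalTuple m m) (Finset.Icc (p + 1) (m + 1))
          (fun w => (List.ofFn w).idxOf 0 + 1)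
          (fun w => MvPolynomial.C (amc m (List.ofFn w) : ℤ)
            * ∏ t : Fin m, MvPolynomial.X t ^ w t)
        have hfc : (Finset.Nat.antidiagonalTuple m m).filter
            (fun w => (List.ofFn w).idxOf 0 + 1 ∈ Finset.Icc (p + 1) (m + 1))
            = (Finset.Nat.antidiagonalTuple m m).filter
              (fun w => p ≤ (List.ofFn w).idxOf 0) := by
          apply Finset.filter_congr
          intro w _
          have := Aux.indexOf_ofFn_le w
          simp only [Finset.mem_Icc]
          constructor <;> (intro h; omega)
        rw [← map_sum, hfib, hfc]
        exact Aux.claim2 hp1 hpm' j hj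
    · -- p = m + 1
      subst hpm'
      rw [Finset.Icc_eq_empty (by omega), Finset.sum_empty, mul_zero]
      have hempty : (Finset.Nat.antidiagonalTuple (m + 1) (m + 1)).filter
          (fun v => (List.ofFn v).idxOf 0 = m + 1 ∧ ¬ v j = 1) = ∅ := by
        rw [Finset.filter_eq_empty_iff]
        intro v hv
        rintro ⟨hidx, hne⟩
        have hsum := Finset.Nat.mem_antidiagonalTuple.mp hv
        have hge : ∀ t : Fin (m + 1), 1 ≤ v t := by
          intro t
          have := Aux.ne_zero_of_lt_indexOf (v := v) (q := t) (by rw [hidx]; exact t.isLt)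
          omega
        have hj2 : 2 ≤ v j := by have := hge j; omega
        have hbig : ∑ t : Fin (m + 1), (Function.update (fun _ : Fin (m + 1) => 1) j 2) t
            ≤ ∑ t : Fin (m + 1), v t := by
          apply Finset.sum_le_sum
          intro t _
          rw [Function.update_apply]
          split_ifs with h
          · rw [h]; exact hj2
          · exact hge t
        have hcount : ∑ t : Fin (m + 1), (Function.update (fun _ : Fin (m + 1) => 1) j 2) t
            = m + 2 := by
          rw [Finset.sum_update_of_mem (Finset.mem_univ j)]
          have hcard : (Finset.univ \ {j} : Finset (Fin (m + 1))).card = m := by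
            rw [Finset.sdiff_singleton_eq_erase, Finset.card_erase_of_mem (Finset.mem_univ j)]
            simp
          rw [Finset.sum_const, hcard]
          simp only [smul_eq_mul, mul_one]
          omega
        omega
      rw [hempty, Finset.sum_empty, add_zero, add_zero]
      exact Aux.claim1 hp1 hpm j hj
  · -- Part 3
    intro n hn
    unfold Fpoly Fni
    rw [Finset.sum_fiberwise_eq_sum_filter]
    symm
    apply Finset.sum_filter_of_ne
    intro v hv hne
    simp only [Finset.mem_Icc]
    have hle := Aux.indexOf_ofFn_le v
    by_contra hc
    have hidx0 : (List.ofFn v).idxOf 0 = 0 := by omega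
    obtain ⟨m, rfl⟩ : ∃ m, n = m + 1 := ⟨n - 1, by omega⟩
    rw [Aux.amc_succ (by omega), hidx0] at hne
    simp at hne
end

section
/- For all n ≥ 2, the generating function of the asymmetric multinomial coefficients satisfies F_n(x_1,…,x_n) = Σ_{i=1}^{n} (x_1+⋯+x_i)·F_{n−1,≥i}(X∖x_i), where for 1 ≤ i ≤ m+1 one sets F_{m,≥i} = F_{m,i} + F_{m,i+1} + ⋯ + F_{m,m+1}. -/
open Finset

/-- F_{m,≥i} = F_{m,i} + F_{m,i+1} + ⋯ + F_{m,m+1}. -/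
noncomputable def FnGe (m i : ℕ) : MvPolynomial (Fin m) ℤ :=
  ∑ ℓ ∈ Finset.Icc i (m + 1), Fni m ℓ

section AuxStatement11

/-- index of leftmost zero of a tuple -/
def fidx {N : ℕ} (v : Fin N → ℕ) : ℕ := (List.ofFn v).idxOf 0

lemma fidx_def {N : ℕ} (v : Fin N → ℕ) :
    fidx v = (List.ofFn v).findIdx (· == 0) := rfl

lemma fidx_le {N : ℕ} (v : Fin N → ℕ) : fidx v ≤ N := by
  simpa [fidx_def] using List.findIdx_le_length (p := (· == 0)) (xs := List.ofFn v)

lemma ne_zero_of_lt_fidx {N : ℕ} {v : Fin N → ℕ} {j : ℕ} (h : j < fidx v) (hj : j < N) :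
    v ⟨j, hj⟩ ≠ 0 := by
  have := List.not_of_lt_findIdx (p := (· == 0)) (xs := List.ofFn v) (i := j) h
  simpa using this

lemma fidx_zero {N : ℕ} {v : Fin N → ℕ} (h : fidx v < N) : v ⟨fidx v, h⟩ = 0 := by
  have := List.findIdx_getElem (p := (· == 0)) (xs := List.ofFn v)
    (w := by simpa [fidx_def] using h)
  simp at this
  exact this

lemma le_fidx_of {N : ℕ} {v : Fin N → ℕ} {c : ℕ} (hc : c ≤ N)
    (h : ∀ p : Fin N, (p : ℕ) < c → v p ≠ 0) : c ≤ fidx v := by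
  by_contra hlt
  push_neg at hlt
  have hN : fidx v < N := lt_of_lt_of_le hlt hc
  exact h ⟨fidx v, hN⟩ hlt (fidx_zero hN)

lemma fidx_lt_of_exists {N : ℕ} {v : Fin N → ℕ} (h : ∃ p, v p = 0) : fidx v < N := by
  obtain ⟨p, hp⟩ := h
  rw [fidx_def]
  have h0 : (0 : ℕ) ∈ List.ofFn v := by
    simp only [List.mem_ofFn]
    exact ⟨p, hp.symm ▸ rfl⟩
  simpa using List.findIdx_lt_length.2 ⟨0, h0, rfl⟩

lemma fidx_eq {N : ℕ} {v : Fin N → ℕ} {i : Fin N} (h0 : v i = 0)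
    (h : ∀ p : Fin N, (p : ℕ) < (i : ℕ) → v p ≠ 0) : fidx v = (i : ℕ) := by
  refine le_antisymm ?_ (le_fidx_of (le_of_lt i.isLt) h)
  by_contra hlt
  push_neg at hlt
  exact ne_zero_of_lt_fidx hlt i.isLt (by simpa using h0)

lemma ofFn_set {N : ℕ} (v : Fin N → ℕ) (j : ℕ) (hj : j < N) (x : ℕ) :
    (List.ofFn v).set j x = List.ofFn (Function.update v ⟨j, hj⟩ x) := by
  apply List.ext_getElem
  · simp
  intro k h1 h2
  simp only [List.getElem_set, List.getElem_ofFn, Function.update_apply, Fin.ext_iff]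
  simp only [List.length_set, List.length_ofFn] at h1
  by_cases hk : j = k
  · simp [hk]
  · rw [if_neg hk, if_neg (by simpa using fun hh => hk hh.symm)]

lemma ofFn_eraseIdx {N : ℕ} (v : Fin (N + 1) → ℕ) (i : Fin (N + 1)) :
    (List.ofFn v).eraseIdx (i : ℕ) = List.ofFn (fun t : Fin N => v (i.succAbove t)) := by
  apply List.ext_getElem
  · have := i.isLt
    simp [List.length_eraseIdx]
    omega
  intro k h1 h2
  rw [List.getElem_eraseIdx]
  simp only [List.length_ofFn] at h2
  by_cases hk : k < (i : ℕ)
  · rw [dif_pos hk]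
    simp only [List.getElem_ofFn]
    congr 1
    rw [Fin.succAbove_of_castSucc_lt]
    · rfl
    · exact hk
  · rw [dif_neg hk]
    simp only [List.getElem_ofFn]
    congr 1
    rw [Fin.succAbove_of_le_castSucc]
    · rfl
    · exact not_lt.1 hk

lemma ktilde_ofFn {m : ℕ} (v : Fin (m + 1) → ℕ) (j : ℕ) (hj : j < m + 1)
    (hz : fidx (Function.update v ⟨j, hj⟩ (v ⟨j, hj⟩ - 1)) < m + 1) :
    ktilde (List.ofFn v) j =
      List.ofFn (fun t : Fin m =>
        Function.update v ⟨j, hj⟩ (v ⟨j, hj⟩ - 1)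
          ((⟨fidx (Function.update v ⟨j, hj⟩ (v ⟨j, hj⟩ - 1)), hz⟩ :
            Fin (m + 1)).succAbove t)) := by
  unfold ktilde
  have hgd : (List.ofFn v).getD j 0 = v ⟨j, hj⟩ := by
    rw [List.getD_eq_getElem?_getD, List.getElem?_eq_getElem (by simpa using hj),
      List.getElem_ofFn]
    simp
  rw [hgd, ofFn_set v j hj]
  refine (List.erase_eq_eraseIdx_of_idxOf (a := 0)
    (l := List.ofFn (Function.update v ⟨j, hj⟩ (v ⟨j, hj⟩ - 1))) rfl).trans ?_
  exact ofFn_eraseIdx _ ⟨fidx (Function.update v ⟨j, hj⟩ (v ⟨j, hj⟩ - 1)), hz⟩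

lemma amc_succ (m : ℕ) (hm : 1 ≤ m) (k : List ℕ) :
    amc (m + 1) k = ∑ j ∈ Finset.range (k.idxOf 0), amc m (ktilde k j) := by
  obtain ⟨m', rfl⟩ : ∃ m', m = m' + 1 := ⟨m - 1, by omega⟩
  rfl

lemma exists_zero_of_sum {N : ℕ} {v : Fin (N + 1) → ℕ} (h : ∑ s, v s = N) :
    ∃ p, v p = 0 := by
  by_contra hc
  push_neg at hc
  have h1 : ∀ s ∈ (univ : Finset (Fin (N + 1))), 1 ≤ v s :=
    fun s _ => Nat.one_le_iff_ne_zero.2 (hc s)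
  have := Finset.sum_le_sum h1
  simp at this
  omega

lemma skip_eq_succAbove {m : ℕ} (i : Fin (m + 1)) (t : Fin m) :
    skip m (i : ℕ) t = i.succAbove t := by
  unfold skip
  rw [Fin.succAbove]
  by_cases h : (t : ℕ) < (i : ℕ)
  · rw [if_pos h, if_pos (by exact h)]
  · rw [if_neg h, if_neg (by exact h)]

lemma sum_succAbove_of_zero {N : ℕ} (f : Fin (N + 1) → ℕ) (i : Fin (N + 1)) (h : f i = 0) :
    ∑ t : Fin N, f (i.succAbove t) = ∑ s, f s := by
  rw [Fin.sum_univ_succAbove f i, h, zero_add]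

lemma le_fidx_succAbove {N : ℕ} (f : Fin (N + 1) → ℕ) (i : Fin (N + 1))
    (h : ∀ p : Fin (N + 1), (p : ℕ) < (i : ℕ) → f p ≠ 0) :
    (i : ℕ) ≤ fidx (fun t : Fin N => f (i.succAbove t)) := by
  refine le_fidx_of (Nat.lt_succ_iff.1 i.isLt) (fun t ht => ?_)
  rw [Fin.succAbove_of_castSucc_lt _ _ (by exact ht)]
  exact h t.castSucc ht

lemma sum_update_add {N : ℕ} (f : Fin N → ℕ) (j : Fin N) (b : ℕ) :
    (∑ s, Function.update f j b s) + f j = (∑ s, f s) + b := by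
  rw [Finset.sum_update_of_mem (Finset.mem_univ j),
    Finset.sum_eq_sum_sdiff_singleton_add (Finset.mem_univ j) f]
  omega

lemma pair_ext {A B : Type*} {q q' : Σ _ : A, B} (h1 : q.1 = q'.1) (h2 : q.2 = q'.2) :
    q = q' := by
  obtain ⟨a, b⟩ := q
  obtain ⟨a', b'⟩ := q'
  cases h1
  cases h2
  rfl

lemma triple_ext {A B C : Type*} {q q' : Σ _ : A, Σ _ : B, C} (h1 : q.1 = q'.1)
    (h2 : q.2.1 = q'.2.1) (h3 : q.2.2 = q'.2.2) : q = q' := by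
  obtain ⟨a, b, c⟩ := q
  obtain ⟨a', b', c'⟩ := q'
  cases h1
  cases h2
  cases h3
  rfl

/-- the forward map -/
def phiMap (m : ℕ) (p : Σ _ : (Fin (m + 1) → ℕ), ℕ) :
    Σ _ : Fin (m + 1), Σ _ : Fin (m + 1), (Fin m → ℕ) :=
  if hj : p.2 < m + 1 then
    if hz : fidx (Function.update p.1 ⟨p.2, hj⟩ (p.1 ⟨p.2, hj⟩ - 1)) < m + 1 then
      ⟨⟨fidx (Function.update p.1 ⟨p.2, hj⟩ (p.1 ⟨p.2, hj⟩ - 1)), hz⟩, ⟨p.2, hj⟩,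
        fun t => Function.update p.1 ⟨p.2, hj⟩ (p.1 ⟨p.2, hj⟩ - 1)
          ((⟨fidx (Function.update p.1 ⟨p.2, hj⟩ (p.1 ⟨p.2, hj⟩ - 1)), hz⟩ :
            Fin (m + 1)).succAbove t)⟩
    else ⟨0, 0, fun _ => 0⟩
  else ⟨0, 0, fun _ => 0⟩

/-- the backward map -/
def psiMap (m : ℕ) (q : Σ _ : Fin (m + 1), Σ _ : Fin (m + 1), (Fin m → ℕ)) :
    Σ _ : (Fin (m + 1) → ℕ), ℕ :=
  ⟨Function.update (q.1.insertNth 0 q.2.2 : Fin (m + 1) → ℕ) q.2.1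
      ((q.1.insertNth 0 q.2.2 : Fin (m + 1) → ℕ) q.2.1 + 1),
    (q.2.1 : ℕ)⟩

lemma phiMap_eq {m : ℕ} (v : Fin (m + 1) → ℕ) (j : ℕ) (hjm : j < m + 1)
    (hz : fidx (Function.update v ⟨j, hjm⟩ (v ⟨j, hjm⟩ - 1)) < m + 1) :
    phiMap m ⟨v, j⟩ =
      ⟨⟨fidx (Function.update v ⟨j, hjm⟩ (v ⟨j, hjm⟩ - 1)), hz⟩, ⟨j, hjm⟩,
        fun t => Function.update v ⟨j, hjm⟩ (v ⟨j, hjm⟩ - 1)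
          ((⟨fidx (Function.update v ⟨j, hjm⟩ (v ⟨j, hjm⟩ - 1)), hz⟩ :
            Fin (m + 1)).succAbove t)⟩ := by
  unfold phiMap
  rw [dif_pos hjm, dif_pos hz]

end AuxStatement11

lemma insertNth_castSucc_of_lt {N : ℕ} (i : Fin (N + 1)) (x : ℕ) (w : Fin N → ℕ)
    (t : Fin N) (ht : (t : ℕ) < (i : ℕ)) :
    Fin.insertNth (α := fun _ => ℕ) i x w t.castSucc = w t := by
  rw [← Fin.succAbove_of_castSucc_lt i t (by simpa [Fin.lt_def] using ht)]
  exact Fin.insertNth_apply_succAbove (α := fun _ => ℕ) i x w t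

/-- For all n ≥ 2 (written n = m+1, m ≥ 1),
F_n(X) = Σ_{i=1}^{n} (x_1+⋯+x_i)·F_{n-1,≥i}(X∖x_i).
(The 1-based index i corresponds to the 0-based `i : Fin (m+1)` with value i-1.) -/
theorem statement11 (m : ℕ) (hm : 1 ≤ m) :
    Fpoly (m + 1) =
      ∑ i : Fin (m + 1),
        (∑ j ∈ Finset.univ.filter (fun j : Fin (m + 1) => j ≤ i), MvPolynomial.X j) *
          MvPolynomial.rename (skip m (i : ℕ)) (FnGe m ((i : ℕ) + 1)) := by
  classical
  have hfid : ∀ {N : ℕ} (w : Fin N → ℕ), (List.ofFn w).idxOf 0 = fidx w := fun _ => rfl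
  -- step 1 : rewrite the right-hand side as a triple sum
  have hrhs : ∀ i : Fin (m + 1),
      (∑ j ∈ Finset.univ.filter (fun j : Fin (m + 1) => j ≤ i), MvPolynomial.X j) *
          MvPolynomial.rename (skip m (i : ℕ)) (FnGe m ((i : ℕ) + 1)) =
        ∑ j ∈ Finset.univ.filter (fun j : Fin (m + 1) => j ≤ i),
          ∑ w ∈ (Finset.Nat.antidiagonalTuple m m).filter (fun w => (i : ℕ) ≤ fidx w),
            MvPolynomial.X j * (MvPolynomial.C (amc m (List.ofFn w) : ℤ) *
              ∏ t : Fin m, MvPolynomial.X (skip m (i : ℕ) t) ^ w t) := by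
    intro i
    have h1 : MvPolynomial.rename (skip m (i : ℕ)) (FnGe m ((i : ℕ) + 1)) =
        ∑ w ∈ (Finset.Nat.antidiagonalTuple m m).filter (fun w => (i : ℕ) ≤ fidx w),
          MvPolynomial.C (amc m (List.ofFn w) : ℤ) *
            ∏ t : Fin m, MvPolynomial.X (skip m (i : ℕ) t) ^ w t := by
      unfold FnGe Fni
      rw [map_sum]
      simp only [map_sum, map_mul, MvPolynomial.rename_C, map_prod, map_pow,
        MvPolynomial.rename_X]
      rw [Finset.sum_fiberwise_eq_sum_filter]
      refine Finset.sum_congr (Finset.filter_congr fun w _ => ?_) fun w _ => rfl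
      have h2 := fidx_le w
      rw [Finset.mem_Icc, hfid w]
      omega
    rw [h1, Finset.sum_mul]
    refine Finset.sum_congr rfl fun j _ => ?_
    rw [Finset.mul_sum]
  -- step 2 : rewrite the left-hand side as a double sum
  have hlhs : Fpoly (m + 1) =
      ∑ v ∈ Finset.Nat.antidiagonalTuple (m + 1) (m + 1), ∑ j ∈ Finset.range (fidx v),
        MvPolynomial.C (amc m (ktilde (List.ofFn v) j) : ℤ) *
          ∏ s, MvPolynomial.X s ^ v s := by
    unfold Fpoly
    refine Finset.sum_congr rfl fun v _ => ?_
    rw [amc_succ m hm, hfid v, Nat.cast_sum (Finset.range (fidx v))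
      (fun j => amc m (ktilde (List.ofFn v) j)), map_sum, Finset.sum_mul]
  rw [hlhs, Finset.sum_congr rfl fun i _ => hrhs i]
  -- step 3 : convert both sides to sums over sigma types
  have e1 : (∑ v ∈ Finset.Nat.antidiagonalTuple (m + 1) (m + 1),
      ∑ j ∈ Finset.range (fidx v),
        MvPolynomial.C (amc m (ktilde (List.ofFn v) j) : ℤ) *
          ∏ s, MvPolynomial.X s ^ v s) =
      ∑ p ∈ (Finset.Nat.antidiagonalTuple (m + 1) (m + 1)).sigma
          (fun v => Finset.range (fidx v)),
        MvPolynomial.C (amc m (ktilde (List.ofFn p.1) p.2) : ℤ) *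
          ∏ s, MvPolynomial.X s ^ p.1 s := by
    rw [Finset.sum_sigma]
  have e2 : (∑ i : Fin (m + 1),
      ∑ j ∈ Finset.univ.filter (fun j : Fin (m + 1) => j ≤ i),
        ∑ w ∈ (Finset.Nat.antidiagonalTuple m m).filter (fun w => (i : ℕ) ≤ fidx w),
          MvPolynomial.X j * (MvPolynomial.C (amc m (List.ofFn w) : ℤ) *
            ∏ t : Fin m, MvPolynomial.X (skip m (i : ℕ) t) ^ w t)) =
      ∑ q ∈ (Finset.univ : Finset (Fin (m + 1))).sigma (fun i =>
          (Finset.univ.filter (fun j : Fin (m + 1) => j ≤ i)).sigma (fun _ =>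
            (Finset.Nat.antidiagonalTuple m m).filter (fun w => (i : ℕ) ≤ fidx w))),
        MvPolynomial.X q.2.1 * (MvPolynomial.C (amc m (List.ofFn q.2.2) : ℤ) *
          ∏ t : Fin m, MvPolynomial.X (skip m (q.1 : ℕ) t) ^ q.2.2 t) := by
    rw [Finset.sum_sigma]
    refine Finset.sum_congr rfl fun i _ => ?_
    rw [Finset.sum_sigma]
  rw [e1, e2]
  -- step 4 : the bijection
  refine Finset.sum_bij' (fun p _ => phiMap m p) (fun q _ => psiMap m q) ?_ ?_ ?_ ?_ ?_
  · -- phiMap lands in the target finset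
    rintro ⟨v, j⟩ hp
    simp only [Finset.mem_sigma, Finset.Nat.mem_antidiagonalTuple, Finset.mem_range] at hp
    obtain ⟨hv, hj⟩ := hp
    have hjm : j < m + 1 := lt_of_lt_of_le hj (fidx_le v)
    have hne : v ⟨j, hjm⟩ ≠ 0 := ne_zero_of_lt_fidx hj hjm
    have hsum : ∑ s, Function.update v ⟨j, hjm⟩ (v ⟨j, hjm⟩ - 1) s = m := by
      have h3 := sum_update_add v ⟨j, hjm⟩ (v ⟨j, hjm⟩ - 1)
      omega
    have hzlt : fidx (Function.update v ⟨j, hjm⟩ (v ⟨j, hjm⟩ - 1)) < m + 1 :=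
      fidx_lt_of_exists (exists_zero_of_sum hsum)
    have hjle : j ≤ fidx (Function.update v ⟨j, hjm⟩ (v ⟨j, hjm⟩ - 1)) := by
      refine le_fidx_of (show j ≤ m + 1 by omega) fun p hp => ?_
      rw [Function.update_of_ne (Fin.ne_of_val_ne (show (p : ℕ) ≠ j by omega))]
      have h5 := ne_zero_of_lt_fidx (lt_trans hp hj) p.isLt
      simpa using h5
    rw [phiMap_eq v j hjm hzlt]
    set dv := Function.update v ⟨j, hjm⟩ (v ⟨j, hjm⟩ - 1) with hdv
    rw [Finset.mem_sigma, Finset.mem_sigma]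
    refine ⟨Finset.mem_univ _, Finset.mem_filter.2 ⟨Finset.mem_univ _, ?_⟩,
      Finset.mem_filter.2 ⟨Finset.Nat.mem_antidiagonalTuple.2 ?_, ?_⟩⟩
    · exact hjle
    · exact (sum_succAbove_of_zero dv ⟨fidx dv, hzlt⟩ (fidx_zero hzlt)).trans hsum
    · refine le_fidx_succAbove dv ⟨fidx dv, hzlt⟩ fun p hp => ?_
      have h6 := ne_zero_of_lt_fidx (v := dv) hp p.isLt
      simpa using h6
  · -- psiMap lands in the source finset
    rintro ⟨i, j, w⟩ hq
    simp only [Finset.mem_sigma, Finset.mem_filter, Finset.mem_univ, true_and,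
      Finset.Nat.mem_antidiagonalTuple] at hq
    obtain ⟨hji, hw1, hiw⟩ := hq
    have hulow : ∀ p : Fin (m + 1), (p : ℕ) < (i : ℕ) →
        (Fin.insertNth (α := fun _ => ℕ) i 0 w) p ≠ 0 := by
      intro p hp
      have hpm : (p : ℕ) < m := lt_of_lt_of_le hp (Nat.lt_succ_iff.1 i.isLt)
      have hc : (⟨(p : ℕ), hpm⟩ : Fin m).castSucc = p := Fin.ext rfl
      rw [← hc, insertNth_castSucc_of_lt i 0 w _ (by exact hp)]
      exact ne_zero_of_lt_fidx (lt_of_lt_of_le hp hiw) hpm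
    dsimp only [psiMap]
    rw [Finset.mem_sigma, Finset.Nat.mem_antidiagonalTuple, Finset.mem_range]
    have husum : ∑ s, (Fin.insertNth (α := fun _ => ℕ) i 0 w) s = m := by
      rw [Fin.sum_univ_succAbove (Fin.insertNth (α := fun _ => ℕ) i 0 w) i]
      simp only [Fin.insertNth_apply_same, Fin.insertNth_apply_succAbove, zero_add]
      exact hw1
    constructor
    · show ∑ s, Function.update (Fin.insertNth (α := fun _ => ℕ) i 0 w) j
        ((Fin.insertNth (α := fun _ => ℕ) i 0 w) j + 1) s = m + 1
      have h3 := sum_update_add (Fin.insertNth (α := fun _ => ℕ) i 0 w) j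
        ((Fin.insertNth (α := fun _ => ℕ) i 0 w) j + 1)
      omega
    · show (j : ℕ) < fidx (Function.update (Fin.insertNth (α := fun _ => ℕ) i 0 w) j
        ((Fin.insertNth (α := fun _ => ℕ) i 0 w) j + 1))
      refine lt_of_lt_of_le (Nat.lt_succ_self _)
        (le_fidx_of (show (j : ℕ) + 1 ≤ m + 1 from j.isLt) fun p hp => ?_)
      by_cases hpj : p = j
      · subst hpj
        rw [Function.update_self]
        omega
      · rw [Function.update_of_ne hpj]
        have hpj' : (p : ℕ) < (j : ℕ) := by
          rcases lt_or_eq_of_le (Nat.lt_succ_iff.1 hp) with h | h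
          · exact h
          · exact absurd (Fin.ext h) hpj
        exact hulow p (lt_of_lt_of_le hpj' hji)
  · -- left inverse
    rintro ⟨v, j⟩ hp
    simp only [Finset.mem_sigma, Finset.Nat.mem_antidiagonalTuple, Finset.mem_range] at hp
    obtain ⟨hv, hj⟩ := hp
    have hjm : j < m + 1 := lt_of_lt_of_le hj (fidx_le v)
    have hne : v ⟨j, hjm⟩ ≠ 0 := ne_zero_of_lt_fidx hj hjm
    have hsum : ∑ s, Function.update v ⟨j, hjm⟩ (v ⟨j, hjm⟩ - 1) s = m := by
      have h3 := sum_update_add v ⟨j, hjm⟩ (v ⟨j, hjm⟩ - 1)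
      omega
    have hzlt : fidx (Function.update v ⟨j, hjm⟩ (v ⟨j, hjm⟩ - 1)) < m + 1 :=
      fidx_lt_of_exists (exists_zero_of_sum hsum)
    rw [phiMap_eq v j hjm hzlt]
    set dv := Function.update v ⟨j, hjm⟩ (v ⟨j, hjm⟩ - 1) with hdv
    dsimp only [psiMap]
    have hins : ((⟨fidx dv, hzlt⟩ : Fin (m + 1)).insertNth 0
        (fun t => dv ((⟨fidx dv, hzlt⟩ : Fin (m + 1)).succAbove t)) : Fin (m + 1) → ℕ) = dv := by
      have h5 := Fin.insertNth_self_removeNth (α := fun _ => ℕ)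
        (⟨fidx dv, hzlt⟩ : Fin (m + 1)) dv
      rw [fidx_zero hzlt] at h5
      exact h5
    refine pair_ext ?_ rfl
    show Function.update _ _ _ = v
    rw [hins]
    have h6 : dv ⟨j, hjm⟩ = v ⟨j, hjm⟩ - 1 := Function.update_self _ _ _
    rw [h6, hdv, Function.update_idem]
    rw [show v ⟨j, hjm⟩ - 1 + 1 = v ⟨j, hjm⟩ by omega]
    exact Function.update_eq_self _ _
  · -- right inverse
    rintro ⟨i, j, w⟩ hq
    simp only [Finset.mem_sigma, Finset.mem_filter, Finset.mem_univ, true_and,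
      Finset.Nat.mem_antidiagonalTuple] at hq
    obtain ⟨hji, hw1, hiw⟩ := hq
    have hulow : ∀ p : Fin (m + 1), (p : ℕ) < (i : ℕ) →
        (Fin.insertNth (α := fun _ => ℕ) i 0 w) p ≠ 0 := by
      intro p hp
      have hpm : (p : ℕ) < m := lt_of_lt_of_le hp (Nat.lt_succ_iff.1 i.isLt)
      have hc : (⟨(p : ℕ), hpm⟩ : Fin m).castSucc = p := Fin.ext rfl
      rw [← hc, insertNth_castSucc_of_lt i 0 w _ (by exact hp)]
      exact ne_zero_of_lt_fidx (lt_of_lt_of_le hp hiw) hpm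
    have hfu : fidx (Fin.insertNth (α := fun _ => ℕ) i 0 w) = (i : ℕ) :=
      fidx_eq (Fin.insertNth_apply_same (α := fun _ => ℕ) i 0 w) hulow
    dsimp only [psiMap]
    set u : Fin (m + 1) → ℕ := (Fin.insertNth (α := fun _ => ℕ) i 0 w) with hu
    set v' : Fin (m + 1) → ℕ := Function.update u j (u j + 1) with hv'
    have hdveq : Function.update v' ⟨(j : ℕ), j.isLt⟩ (v' ⟨(j : ℕ), j.isLt⟩ - 1) = u := by
      have hje : (⟨(j : ℕ), j.isLt⟩ : Fin (m + 1)) = j := Fin.eta j j.isLt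
      rw [hje]
      have h7 : v' j = u j + 1 := Function.update_self j (u j + 1) u
      rw [h7, Nat.add_sub_cancel, hv', Function.update_idem]
      exact Function.update_eq_self _ _
    have hzlt' : fidx (Function.update v' ⟨(j : ℕ), j.isLt⟩ (v' ⟨(j : ℕ), j.isLt⟩ - 1)) <
        m + 1 := by
      rw [hdveq, hfu]
      exact i.isLt
    rw [phiMap_eq v' (j : ℕ) j.isLt hzlt']
    have h8 : (⟨fidx (Function.update v' ⟨(j : ℕ), j.isLt⟩ (v' ⟨(j : ℕ), j.isLt⟩ - 1)),
        hzlt'⟩ : Fin (m + 1)) = i := by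
      refine Fin.ext ?_
      show fidx _ = (i : ℕ)
      rw [hdveq]
      exact hfu
    refine triple_ext h8 (Fin.eta j j.isLt) ?_
    show (fun t => Function.update v' ⟨(j : ℕ), j.isLt⟩ (v' ⟨(j : ℕ), j.isLt⟩ - 1)
        ((⟨fidx (Function.update v' ⟨(j : ℕ), j.isLt⟩ (v' ⟨(j : ℕ), j.isLt⟩ - 1)),
          hzlt'⟩ : Fin (m + 1)).succAbove t)) = w
    funext t
    rw [h8, hdveq]
    exact Fin.insertNth_apply_succAbove (α := fun _ => ℕ) i 0 w t
  · -- summand equality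
    rintro ⟨v, j⟩ hp
    simp only [Finset.mem_sigma, Finset.Nat.mem_antidiagonalTuple, Finset.mem_range] at hp
    obtain ⟨hv, hj⟩ := hp
    have hjm : j < m + 1 := lt_of_lt_of_le hj (fidx_le v)
    have hne : v ⟨j, hjm⟩ ≠ 0 := ne_zero_of_lt_fidx hj hjm
    have hsum : ∑ s, Function.update v ⟨j, hjm⟩ (v ⟨j, hjm⟩ - 1) s = m := by
      have h3 := sum_update_add v ⟨j, hjm⟩ (v ⟨j, hjm⟩ - 1)
      omega
    have hzlt : fidx (Function.update v ⟨j, hjm⟩ (v ⟨j, hjm⟩ - 1)) < m + 1 :=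
      fidx_lt_of_exists (exists_zero_of_sum hsum)
    dsimp only
    rw [phiMap_eq v j hjm hzlt, ktilde_ofFn v j hjm hzlt]
    set dv := Function.update v ⟨j, hjm⟩ (v ⟨j, hjm⟩ - 1) with hdv
    set iF : Fin (m + 1) := (⟨fidx dv, hzlt⟩ : Fin (m + 1)) with hiF
    dsimp only
    have hskip : ∀ t : Fin m, skip m (iF : ℕ) t = iF.succAbove t := fun t =>
      skip_eq_succAbove iF t
    simp only [hskip]
    have h9 : ∏ t : Fin m, (MvPolynomial.X (iF.succAbove t) : MvPolynomial (Fin (m + 1)) ℤ) ^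
        dv (iF.succAbove t) = ∏ s, MvPolynomial.X s ^ dv s := by
      rw [Fin.prod_univ_succAbove (fun s => (MvPolynomial.X s : MvPolynomial (Fin (m + 1)) ℤ)
        ^ dv s) iF]
      have h10 : dv iF = 0 := fidx_zero hzlt
      rw [h10, pow_zero, one_mul]
    rw [h9]
    have h11 : ∏ s, (MvPolynomial.X s : MvPolynomial (Fin (m + 1)) ℤ) ^ v s =
        MvPolynomial.X ⟨j, hjm⟩ * ∏ s, MvPolynomial.X s ^ dv s := by
      rw [Finset.prod_eq_prod_diff_singleton_mul (Finset.mem_univ (⟨j, hjm⟩ : Fin (m + 1)))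
        (fun s => (MvPolynomial.X s : MvPolynomial (Fin (m + 1)) ℤ) ^ v s),
        Finset.prod_eq_prod_diff_singleton_mul (Finset.mem_univ (⟨j, hjm⟩ : Fin (m + 1)))
        (fun s => (MvPolynomial.X s : MvPolynomial (Fin (m + 1)) ℤ) ^ dv s)]
      have h12 : ∏ s ∈ Finset.univ \ {(⟨j, hjm⟩ : Fin (m + 1))},
          (MvPolynomial.X s : MvPolynomial (Fin (m + 1)) ℤ) ^ dv s =
          ∏ s ∈ Finset.univ \ {(⟨j, hjm⟩ : Fin (m + 1))}, MvPolynomial.X s ^ v s := by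
        refine Finset.prod_congr rfl fun s hs => ?_
        rw [Finset.mem_sdiff, Finset.mem_singleton] at hs
        rw [hdv, Function.update_of_ne hs.2]
      rw [h12]
      have h13 : dv ⟨j, hjm⟩ = v ⟨j, hjm⟩ - 1 := Function.update_self _ _ _
      rw [h13]
      have hval : v ⟨j, hjm⟩ = (v ⟨j, hjm⟩ - 1) + 1 := by omega
      nth_rewrite 1 [hval]
      rw [pow_succ]
      ring
    rw [h11]
    ring
end

section
/- For every n ≥ 2, the number of good column-restricted parking functions of size n satisfies |GPF(n)| = Σ_{P ∈ CPF(n−1)} (2n−1 − #{c ∈ {1,…,n−1} : P⁻¹(c) ≠ ∅}). (Equivalently, the insertion map ι restricts to a bijection from pairs (P,p) with P ∈ CPF(n−1) and p one of the 2(n−1)+1 lattice points of the Dyck path of P that is not an upper-left corner onto GPF(n).) -/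
open Finset

attribute [local instance] Classical.propDecidable

/-- `f ∈ CPF(n)` (with n = m+1 and top label `Fin.last m`, i.e. the label n) is good if
either (a) n is the only label in its column, or (b) the column of n contains another
label, with maximum r, and the next column to the right is nonempty with all labels
greater than r (i.e. its minimum label is greater than r). -/
def IsGood (m : ℕ) (f : Fin (m + 1) → Fin (m + 1)) : Prop :=
  (∀ b, f b = f (Fin.last m) → b = Fin.last m) ∨
  (∃ r : Fin (m + 1), r ≠ Fin.last m ∧ f r = f (Fin.last m) ∧
    (∀ b, b ≠ Fin.last m → f b = f (Fin.last m) → b ≤ r) ∧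
    ∃ c : Fin (m + 1), (c : ℕ) = (f (Fin.last m) : ℕ) + 1 ∧
      (∃ b, f b = c) ∧ ∀ b, f b = c → r < b)

namespace S13
variable {m : ℕ}

noncomputable def hcol (f : Fin m → Fin m) (c : ℕ) : ℕ :=
  (univ.filter fun a => (f a : ℕ) = c).card

noncomputable def rank (f : Fin m → Fin m) (a : Fin m) : ℕ :=
  (univ.filter fun b => f b = f a ∧ b < a).card

def stays (f : Fin m → Fin m) (c h : ℕ) (a : Fin m) : Prop :=
  (f a : ℕ) < c ∨ ((f a : ℕ) = c ∧ rank f a < h)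

noncomputable def ins (f : Fin m → Fin m) (c : Fin (m+1)) (h : ℕ) : Fin (m+1) → Fin (m+1) :=
  fun a => if ha : (a : ℕ) < m then
      (if stays f (c:ℕ) h ⟨a, ha⟩ then (f ⟨a,ha⟩).castSucc else (f ⟨a,ha⟩).succ)
    else c

lemma ins_last (f : Fin m → Fin m) (c : Fin (m+1)) (h : ℕ) :
    ins f c h (Fin.last m) = c := by
  simp [ins]

lemma ins_castSucc (f : Fin m → Fin m) (c : Fin (m+1)) (h : ℕ) (a : Fin m) :
    ins f c h a.castSucc = if stays f (c:ℕ) h a then (f a).castSucc else (f a).succ := by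
  simp [ins]

/-- rank is strictly monotone within a column -/
lemma rank_lt_rank {f : Fin m → Fin m} {a b : Fin m} (hab : f a = f b) (h : a < b) :
    rank f a < rank f b := by
  apply Finset.card_lt_card
  constructor
  · intro x hx
    simp only [mem_filter, mem_univ, true_and] at hx ⊢
    exact ⟨hx.1.trans hab, hx.2.trans h⟩
  · intro hsub
    have h2 : a ∈ univ.filter fun x => f x = f b ∧ x < b := by
      simp only [mem_filter, mem_univ, true_and]; exact ⟨hab, h⟩
    have h3 := hsub h2
    simp only [mem_filter, mem_univ, true_and] at h3
    exact absurd h3 (lt_irrefl a)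

lemma rank_lt_rank_iff {f : Fin m → Fin m} {a b : Fin m} (hab : f a = f b) :
    rank f a < rank f b ↔ a < b := by
  constructor
  · intro hr
    rcases lt_trichotomy a b with h | h | h
    · exact h
    · subst h; omega
    · exact absurd (rank_lt_rank hab.symm h) (by omega)
  · exact rank_lt_rank hab

end S13
namespace S13
variable {m : ℕ}

lemma rank_lt_hcol (f : Fin m → Fin m) (b : Fin m) : rank f b < hcol f (f b : ℕ) := by
  apply Finset.card_lt_card
  constructor
  · intro x hx
    simp only [mem_filter, mem_univ, true_and] at hx ⊢
    rw [hx.1]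
  · intro hsub
    have hb : b ∈ univ.filter fun x => (f x : ℕ) = (f b : ℕ) := by simp
    have := hsub hb
    simp only [mem_filter, mem_univ, true_and] at this
    exact absurd this (lt_irrefl b)

lemma rank_injOn {f : Fin m → Fin m} {b₁ b₂ : Fin m} (h1 : (f b₁ : ℕ) = (f b₂ : ℕ))
    (h2 : rank f b₁ = rank f b₂) : b₁ = b₂ := by
  have hf : f b₁ = f b₂ := Fin.ext h1
  rcases lt_trichotomy b₁ b₂ with h | h | h
  · exact absurd (rank_lt_rank hf h) (by omega)
  · exact h
  · exact absurd (rank_lt_rank hf.symm h) (by omega)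

lemma image_rank (f : Fin m → Fin m) (C : ℕ) :
    (univ.filter fun b => (f b : ℕ) = C).image (rank f) = Finset.range (hcol f C) := by
  apply Finset.eq_of_subset_of_card_le
  · intro x hx
    simp only [mem_image, mem_filter, mem_univ, true_and] at hx
    obtain ⟨b, hb, rfl⟩ := hx
    rw [mem_range, ← hb]
    exact rank_lt_hcol f b
  · rw [card_range]
    show hcol f C ≤ _
    rw [Finset.card_image_of_injOn]
    · exact le_refl _
    · intro b₁ hb₁ b₂ hb₂ h
      simp only [coe_filter, mem_univ, Set.mem_setOf_eq, true_and] at hb₁ hb₂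
      exact rank_injOn (hb₁.trans hb₂.symm) h

lemma card_bottom (f : Fin m → Fin m) (C h : ℕ) :
    (univ.filter fun b => (f b : ℕ) = C ∧ rank f b < h).card = min h (hcol f C) := by
  have key : (univ.filter fun b => (f b : ℕ) = C ∧ rank f b < h) =
      ((univ.filter fun b => (f b : ℕ) = C).filter fun b => rank f b < h) := by
    rw [Finset.filter_filter]
  rw [key, ← Finset.card_image_of_injOn (f := rank f)]
  · have him : ((univ.filter fun b => (f b : ℕ) = C).filter fun b => rank f b < h).image (rank f)
        = (Finset.range (hcol f C)).filter fun x => x < h := by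
      rw [← image_rank f C, Finset.filter_image]
    rw [him]
    have : (Finset.range (hcol f C)).filter (fun x => x < h) = Finset.range (min h (hcol f C)) := by
      ext x; simp only [mem_filter, mem_range, lt_min_iff]; omega
    rw [this, card_range]
  · intro b₁ hb₁ b₂ hb₂ hh
    simp only [coe_filter, mem_filter, mem_univ, true_and, Set.mem_setOf_eq] at hb₁ hb₂
    exact rank_injOn (hb₁.1.trans hb₂.1.symm) hh

lemma exists_rank (f : Fin m → Fin m) {C h : ℕ} (hh : h < hcol f C) :
    ∃ b, (f b : ℕ) = C ∧ rank f b = h := by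
  have : h ∈ Finset.range (hcol f C) := by simpa using hh
  rw [← image_rank f C] at this
  simp only [mem_image, mem_filter, mem_univ, true_and] at this
  obtain ⟨b, hb, hr⟩ := this
  exact ⟨b, hb, hr⟩

end S13
namespace S13
variable {m : ℕ}

def InsOK (f : Fin m → Fin m) (c : Fin (m+1)) (h : ℕ) : Prop :=
  ((c : ℕ) = m → h = 0) ∧ ((c : ℕ) < m → h < max (hcol f (c : ℕ)) 1)

lemma InsOK.le_hcol {f : Fin m → Fin m} {c : Fin (m+1)} {h : ℕ} (hok : InsOK f c h) :
    h ≤ hcol f (c : ℕ) := by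
  rcases Nat.lt_or_ge (c : ℕ) m with hc | hc
  · have := hok.2 hc
    rcases Nat.eq_zero_or_pos (hcol f (c : ℕ)) with h0 | h0 <;> omega
  · have : (c : ℕ) = m := le_antisymm (Nat.lt_succ_iff.mp c.isLt) hc
    have := hok.1 this
    omega

lemma ins_val (f : Fin m → Fin m) (c : Fin (m+1)) (h : ℕ) (a : Fin m) :
    (ins f c h a.castSucc : ℕ) =
      if stays f (c : ℕ) h a then (f a : ℕ) else (f a : ℕ) + 1 := by
  rw [ins_castSucc]
  split <;> simp

lemma stays_le {f : Fin m → Fin m} {c h : ℕ} {a : Fin m} (hs : stays f c h a) :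
    (f a : ℕ) ≤ c := by
  rcases hs with h1 | h1
  · omega
  · omega

lemma not_stays_ge {f : Fin m → Fin m} {c h : ℕ} {a : Fin m} (hs : ¬ stays f c h a) :
    c ≤ (f a : ℕ) := by
  by_contra hc
  exact hs (Or.inl (by omega))

/-- membership in a column left of c -/
lemma ins_val_eq_lt {f : Fin m → Fin m} {c : Fin (m+1)} {h : ℕ} {a : Fin m} {d : ℕ}
    (hd : d < (c : ℕ)) : (ins f c h a.castSucc : ℕ) = d ↔ (f a : ℕ) = d := by
  rw [ins_val]
  by_cases hs : stays f (c : ℕ) h a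
  · simp [hs]
  · have := not_stays_ge hs
    simp only [if_neg hs]
    omega

/-- membership in column c -/
lemma ins_val_eq_c {f : Fin m → Fin m} {c : Fin (m+1)} {h : ℕ} {a : Fin m} :
    (ins f c h a.castSucc : ℕ) = (c : ℕ) ↔ ((f a : ℕ) = (c : ℕ) ∧ rank f a < h) := by
  rw [ins_val]
  by_cases hs : stays f (c : ℕ) h a
  · simp only [if_pos hs]
    rcases hs with h1 | h1
    · constructor
      · omega
      · intro hh; omega
    · constructor
      · intro _; exact h1
      · intro _; exact h1.1
  · have := not_stays_ge hs
    simp only [if_neg hs]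
    constructor
    · intro hh; omega
    · intro hh
      exact absurd (Or.inr ⟨hh.1, hh.2⟩) hs

/-- membership in column c+1 -/
lemma ins_val_eq_csucc {f : Fin m → Fin m} {c : Fin (m+1)} {h : ℕ} {a : Fin m} :
    (ins f c h a.castSucc : ℕ) = (c : ℕ) + 1 ↔ ((f a : ℕ) = (c : ℕ) ∧ h ≤ rank f a) := by
  rw [ins_val]
  by_cases hs : stays f (c : ℕ) h a
  · have := stays_le hs
    simp only [if_pos hs]
    constructor
    · intro hh; omega
    · intro hh
      rcases hs with h1 | h1
      · omega
      · omega
  · have := not_stays_ge hs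
    simp only [if_neg hs]
    constructor
    · intro hh
      have hfa : (f a : ℕ) = (c : ℕ) := by omega
      refine ⟨hfa, ?_⟩
      by_contra hr
      exact hs (Or.inr ⟨hfa, by omega⟩)
    · intro hh; omega

/-- membership in a column right of c+1 -/
lemma ins_val_eq_gt {f : Fin m → Fin m} {c : Fin (m+1)} {h : ℕ} {a : Fin m} {d : ℕ}
    (hd : (c : ℕ) + 1 < d) : (ins f c h a.castSucc : ℕ) = d ↔ (f a : ℕ) = d - 1 := by
  rw [ins_val]
  by_cases hs : stays f (c : ℕ) h a
  · have := stays_le hs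
    simp only [if_pos hs]
    constructor
    · intro hh; omega
    · intro hh
      exfalso
      have : (f a : ℕ) = d - 1 := hh
      omega
  · have := not_stays_ge hs
    simp only [if_neg hs]
    omega

end S13
namespace S13
variable {m : ℕ}

/-- the column shift map -/
def psi {m : ℕ} (c : Fin (m+1)) (d : Fin m) : Fin (m+1) :=
  if (d : ℕ) < (c : ℕ) then d.castSucc else d.succ

lemma psi_val {c : Fin (m+1)} (d : Fin m) :
    (psi c d : ℕ) = if (d : ℕ) < (c : ℕ) then (d : ℕ) else (d : ℕ) + 1 := by
  unfold psi; split <;> simp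

lemma psi_ne_c {c : Fin (m+1)} (d : Fin m) : (psi c d : ℕ) ≠ (c : ℕ) := by
  rw [psi_val]; split <;> omega

/-- L1 : threshold preservation -/
lemma psi_lt_ins {f : Fin m → Fin m} {c : Fin (m+1)} {h : ℕ} (a : Fin m) (d : Fin m) :
    (psi c d : ℕ) < (ins f c h a.castSucc : ℕ) ↔ (d : ℕ) < (f a : ℕ) := by
  rw [psi_val, ins_val]
  by_cases hs : stays f (c : ℕ) h a
  · have := stays_le hs
    simp only [if_pos hs]
    split <;> omega
  · have := not_stays_ge hs
    simp only [if_neg hs]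
    split <;> omega

/-- L2 : domination preservation -/
lemma psi_dom {f : Fin m → Fin m} {c : Fin (m+1)} {h : ℕ} (hok : InsOK f c h)
    (a : Fin m) (d : Fin m) :
    (∀ b, ins f c h b = psi c d → b < a.castSucc) ↔ (∀ b, f b = d → b < a) := by
  have hlast : ins f c h (Fin.last m) = c := ins_last f c h
  rcases lt_trichotomy (d : ℕ) (c : ℕ) with hd | hd | hd
  · -- psi c d = castSucc d, column left of c
    constructor
    · intro H b hb
      have hq : ins f c h b.castSucc = psi c d := by
        apply Fin.ext
        rw [psi_val, if_pos hd, ins_val_eq_lt hd]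
        exact congrArg Fin.val hb
      have := H _ hq
      simpa [Fin.castSucc_lt_castSucc_iff] using this
    · intro H b hb
      rcases Fin.eq_castSucc_or_eq_last b with ⟨b', rfl⟩ | rfl
      · have hbv : (ins f c h b'.castSucc : ℕ) = (d : ℕ) := by
          rw [hb, psi_val, if_pos hd]
        rw [ins_val_eq_lt hd] at hbv
        have := H b' (Fin.ext hbv)
        exact Fin.castSucc_lt_castSucc_iff.mpr this
      · rw [hlast] at hb
        exact absurd (congrArg Fin.val hb).symm (psi_ne_c d)
  · -- d = c : column c+1 of Q vs column c of P
    have hcm : (c : ℕ) < m := by have := d.isLt; omega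
    have hpsi : (psi c d : ℕ) = (c : ℕ) + 1 := by rw [psi_val, if_neg (by omega)]; omega
    constructor
    · intro H b hb
      have hbv : (f b : ℕ) = (c : ℕ) := by rw [congrArg Fin.val hb]; omega
      rcases Nat.lt_or_ge (rank f b) h with hr | hr
      · -- bottom element; use a top element
        have hk : 0 < hcol f (c : ℕ) := by
          have hmem : b ∈ univ.filter fun x => (f x : ℕ) = (c : ℕ) := by
            simp only [mem_filter, mem_univ, true_and]; exact hbv
          have := Finset.card_pos.mpr ⟨b, hmem⟩
          simpa [hcol] using this
        have hhk : h < hcol f (c : ℕ) := by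
          have := hok.2 hcm; omega
        obtain ⟨t, ht1, ht2⟩ := exists_rank f hhk
        have hbt : b < t := by
          rw [← rank_lt_rank_iff (Fin.ext (by omega : (f b : ℕ) = (f t : ℕ)))]
          omega
        have htq : ins f c h t.castSucc = psi c d := by
          apply Fin.ext
          rw [hpsi, ins_val_eq_csucc]
          exact ⟨ht1, by omega⟩
        have := H _ htq
        have hta : t < a := by simpa [Fin.castSucc_lt_castSucc_iff] using this
        exact lt_trans hbt hta
      · have hbq : ins f c h b.castSucc = psi c d := by
          apply Fin.ext
          rw [hpsi, ins_val_eq_csucc]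
          exact ⟨hbv, hr⟩
        have := H _ hbq
        simpa [Fin.castSucc_lt_castSucc_iff] using this
    · intro H b hb
      rcases Fin.eq_castSucc_or_eq_last b with ⟨b', rfl⟩ | rfl
      · have hbv : (ins f c h b'.castSucc : ℕ) = (c : ℕ) + 1 := by
          rw [hb, hpsi]
        rw [ins_val_eq_csucc] at hbv
        have := H b' (Fin.ext (by omega : (f b' : ℕ) = (d : ℕ)))
        exact Fin.castSucc_lt_castSucc_iff.mpr this
      · rw [hlast] at hb
        have := congrArg Fin.val hb
        rw [hpsi] at this
        omega
  · -- d > c : column d+1 of Q vs column d of P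
    have hpsi : (psi c d : ℕ) = (d : ℕ) + 1 := by rw [psi_val, if_neg (by omega)]
    have hgt : (c : ℕ) + 1 < (d : ℕ) + 1 := by omega
    constructor
    · intro H b hb
      have hq : ins f c h b.castSucc = psi c d := by
        apply Fin.ext
        rw [hpsi, ins_val_eq_gt hgt]
        have := congrArg Fin.val hb
        omega
      have := H _ hq
      simpa [Fin.castSucc_lt_castSucc_iff] using this
    · intro H b hb
      rcases Fin.eq_castSucc_or_eq_last b with ⟨b', rfl⟩ | rfl
      · have hbv : (ins f c h b'.castSucc : ℕ) = (d : ℕ) + 1 := by rw [hb, hpsi]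
        rw [ins_val_eq_gt hgt] at hbv
        have := H b' (Fin.ext (by omega : (f b' : ℕ) = (d : ℕ)))
        exact Fin.castSucc_lt_castSucc_iff.mpr this
      · rw [hlast] at hb
        have := congrArg Fin.val hb
        rw [hpsi] at this
        omega

end S13
namespace S13
variable {m : ℕ}

lemma domIndex_ins {f : Fin m → Fin m} {c : Fin (m+1)} {h : ℕ} (hok : InsOK f c h)
    (a : Fin m) : domIndex (ins f c h) a.castSucc = domIndex f a := by
  unfold domIndex
  symm
  apply Finset.card_bij (fun d _ => psi c d)
  · -- maps into target
    intro d hd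
    simp only [mem_filter, mem_univ, true_and] at hd ⊢
    constructor
    · rw [Fin.lt_def]
      rw [psi_lt_ins a d]
      exact hd.1
    · exact (psi_dom hok a d).mpr hd.2
  · -- injective
    intro d₁ h₁ d₂ h₂ he
    have := congrArg Fin.val he
    rw [psi_val, psi_val] at this
    apply Fin.ext
    split at this <;> split at this <;> omega
  · -- surjective
    intro d hd
    simp only [mem_filter, mem_univ, true_and] at hd
    have hdc : (d : ℕ) ≠ (c : ℕ) := by
      intro he
      have hl := hd.2 (Fin.last m) (by apply Fin.ext; rw [ins_last]; exact he.symm)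
      exact absurd hl (by simp [Fin.lt_def])
    have hdm : (d : ℕ) < m + 1 := d.isLt
    rcases Nat.lt_or_ge (d : ℕ) (c : ℕ) with hlt | hge
    · have hdm' : (d : ℕ) < m := by have := c.isLt; omega
      refine ⟨⟨(d : ℕ), hdm'⟩, ?_, ?_⟩
      · simp only [mem_filter, mem_univ, true_and]
        have hpsiv : (psi c ⟨(d : ℕ), hdm'⟩ : ℕ) = (d : ℕ) := by
          rw [psi_val, if_pos hlt]
        have hpsi : psi c ⟨(d : ℕ), hdm'⟩ = d := Fin.ext hpsiv
        constructor
        · rw [Fin.lt_def, ← psi_lt_ins a ⟨(d : ℕ), hdm'⟩, hpsiv]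
          exact Fin.lt_def.mp hd.1
        · rw [← psi_dom hok a ⟨(d : ℕ), hdm'⟩]
          intro b hb
          exact hd.2 b (by rw [hb, hpsi])
      · apply Fin.ext
        rw [psi_val, if_pos hlt]
    · have hged : (c : ℕ) < (d : ℕ) := by omega
      have hd1 : (d : ℕ) - 1 < m := by
        have : (ins f c h a.castSucc : ℕ) < m + 1 := (ins f c h a.castSucc).isLt
        have := Fin.lt_def.mp hd.1
        omega
      refine ⟨⟨(d : ℕ) - 1, hd1⟩, ?_, ?_⟩
      · simp only [mem_filter, mem_univ, true_and]
        have hpsiv : (psi c ⟨(d : ℕ) - 1, hd1⟩ : ℕ) = (d : ℕ) := by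
          rw [psi_val, if_neg (by simp only []; omega)]
          simp only []
          omega
        have hpsi : psi c ⟨(d : ℕ) - 1, hd1⟩ = d := Fin.ext hpsiv
        constructor
        · rw [Fin.lt_def, ← psi_lt_ins a ⟨(d : ℕ) - 1, hd1⟩, hpsiv]
          exact Fin.lt_def.mp hd.1
        · rw [← psi_dom hok a ⟨(d : ℕ) - 1, hd1⟩]
          intro b hb
          exact hd.2 b (by rw [hb, hpsi])
      · apply Fin.ext
        rw [psi_val, if_neg (by simp only []; omega)]
        simp only []
        omega

lemma domIndex_last_le (g : Fin (m+1) → Fin (m+1)) :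
    domIndex g (Fin.last m) ≤ m := by
  unfold domIndex
  have hsub : (univ.filter fun d : Fin (m+1) => d < g (Fin.last m) ∧
      ∀ b, g b = d → b < Fin.last m) ⊆ univ.erase (Fin.last m) := by
    intro d hd
    simp only [mem_filter, mem_univ, true_and] at hd
    apply Finset.mem_erase.mpr
    refine ⟨?_, mem_univ d⟩
    intro he
    have := hd.1
    rw [he] at this
    exact absurd (lt_of_lt_of_le this (Fin.le_last _)) (lt_irrefl _)
  have := Finset.card_le_card hsub
  rwa [Finset.card_erase_of_mem (mem_univ _), Finset.card_univ, Fintype.card_fin] at this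

end S13

namespace S13
variable {m : ℕ}

lemma parking_ins {f : Fin m → Fin m} {c : Fin (m+1)} {h : ℕ}
    (hf : IsParking m f) : IsParking (m+1) (ins f c h) := by
  intro i hi
  rcases le_or_gt i ((c : ℕ)) with hic | hic
  · -- i ≤ c : same count via castSucc
    have him : i ≤ m := le_trans hic (Nat.lt_succ_iff.mp c.isLt)
    have key : (univ.filter fun b : Fin (m+1) => (ins f c h b : ℕ) < i) =
        (univ.filter fun a : Fin m => (f a : ℕ) < i).image Fin.castSucc := by
      ext b
      simp only [mem_filter, mem_univ, true_and, mem_image]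
      constructor
      · intro hb
        rcases Fin.eq_castSucc_or_eq_last b with ⟨b', rfl⟩ | rfl
        · refine ⟨b', ?_, rfl⟩
          rw [ins_val] at hb
          by_cases hs : stays f (c : ℕ) h b'
          · rw [if_pos hs] at hb; exact hb
          · rw [if_neg hs] at hb
            have := not_stays_ge hs
            omega
        · rw [ins_last] at hb
          omega
      · rintro ⟨b', hb', rfl⟩
        rw [ins_val]
        by_cases hs : stays f (c : ℕ) h b'
        · rw [if_pos hs]; exact hb'
        · rw [if_neg hs]
          have := not_stays_ge hs
          omega
    rw [key, Finset.card_image_of_injective _ (Fin.castSucc_injective m)]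
    exact hf i him
  · -- i > c
    have him : i - 1 ≤ m := by omega
    have hsub : insert (Fin.last m)
        ((univ.filter fun a : Fin m => (f a : ℕ) < i - 1).image Fin.castSucc) ⊆
        (univ.filter fun b : Fin (m+1) => (ins f c h b : ℕ) < i) := by
      intro b hb
      rcases Finset.mem_insert.mp hb with rfl | hb
      · simp only [mem_filter, mem_univ, true_and]
        rw [ins_last]; omega
      · simp only [mem_image, mem_filter, mem_univ, true_and] at hb
        obtain ⟨b', hb', rfl⟩ := hb
        simp only [mem_filter, mem_univ, true_and]
        rw [ins_val]
        split <;> omega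
    have hcard := Finset.card_le_card hsub
    rw [Finset.card_insert_of_notMem, Finset.card_image_of_injective _
      (Fin.castSucc_injective m)] at hcard
    · have := hf (i-1) him
      omega
    · intro hmem
      simp only [mem_image] at hmem
      obtain ⟨b', _, hb'⟩ := hmem
      exact absurd (congrArg Fin.val hb') (by simp; omega)

lemma good_ins {f : Fin m → Fin m} {c : Fin (m+1)} {h : ℕ} (hok : InsOK f c h) :
    IsGood m (ins f c h) := by
  have hlast : ins f c h (Fin.last m) = c := ins_last f c h
  rcases Nat.eq_zero_or_pos h with rfl | hpos
  · -- h = 0 : the top label is alone in its column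
    left
    intro b hb
    rcases Fin.eq_castSucc_or_eq_last b with ⟨b', rfl⟩ | rfl
    · exfalso
      rw [hlast] at hb
      have : (ins f c 0 b'.castSucc : ℕ) = (c : ℕ) := congrArg Fin.val hb
      rw [ins_val_eq_c] at this
      omega
    · rfl
  · -- h ≥ 1
    right
    have hcm : (c : ℕ) < m := by
      rcases Nat.lt_or_ge (c : ℕ) m with hc | hc
      · exact hc
      · exfalso
        have : (c : ℕ) = m := le_antisymm (Nat.lt_succ_iff.mp c.isLt) hc
        have := hok.1 this
        omega
    have hk : h < hcol f (c : ℕ) := by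
      have := hok.2 hcm
      rcases Nat.eq_zero_or_pos (hcol f (c : ℕ)) with h0 | h0 <;> omega
    -- the bottom set is nonempty
    obtain ⟨b₀, hb₀1, hb₀2⟩ := exists_rank f (show 0 < hcol f (c:ℕ) by omega)
    set B := univ.filter fun b : Fin m => (f b : ℕ) = (c : ℕ) ∧ rank f b < h with hB
    have hBne : B.Nonempty := ⟨b₀, by simp only [hB, mem_filter, mem_univ, true_and]; exact ⟨hb₀1, by omega⟩⟩
    set r' := B.max' hBne with hr'
    have hr'mem : r' ∈ B := B.max'_mem hBne
    simp only [hB, mem_filter, mem_univ, true_and] at hr'mem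
    refine ⟨r'.castSucc, ?_, ?_, ?_, ?_⟩
    · exact Fin.ne_of_lt (Fin.castSucc_lt_last r')
    · rw [hlast]
      apply Fin.ext
      rw [ins_val_eq_c]
      exact hr'mem
    · intro b hbne hb
      rw [hlast] at hb
      rcases Fin.eq_castSucc_or_eq_last b with ⟨b', rfl⟩ | rfl
      · have : (ins f c h b'.castSucc : ℕ) = (c : ℕ) := congrArg Fin.val hb
        rw [ins_val_eq_c] at this
        have : b' ∈ B := by simp only [hB, mem_filter, mem_univ, true_and]; exact this
        exact Fin.castSucc_le_castSucc_iff.mpr (B.le_max' b' this)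
      · exact absurd rfl hbne
    · refine ⟨⟨(c : ℕ) + 1, by omega⟩, ?_, ?_, ?_⟩
      · rw [hlast]
      · obtain ⟨t, ht1, ht2⟩ := exists_rank f hk
        refine ⟨t.castSucc, ?_⟩
        apply Fin.ext
        show (ins f c h t.castSucc : ℕ) = (c : ℕ) + 1
        rw [ins_val_eq_csucc]
        exact ⟨ht1, by omega⟩
      · intro b hb
        rcases Fin.eq_castSucc_or_eq_last b with ⟨b', rfl⟩ | rfl
        · have : (ins f c h b'.castSucc : ℕ) = (c : ℕ) + 1 := congrArg Fin.val hb
          rw [ins_val_eq_csucc] at this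
          apply Fin.castSucc_lt_castSucc_iff.mpr
          rw [← rank_lt_rank_iff (Fin.ext (by omega : (f r' : ℕ) = (f b' : ℕ)))]
          omega
        · rw [hlast] at hb
          have := congrArg Fin.val hb
          simp only [] at this
          omega

lemma cpf_ins {f : Fin m → Fin m} {c : Fin (m+1)} {h : ℕ} (hok : InsOK f c h)
    (hf : IsCPF m f) : IsCPF (m+1) (ins f c h) := by
  constructor
  · exact parking_ins hf.1
  · intro a
    rcases Fin.eq_castSucc_or_eq_last a with ⟨a', rfl⟩ | rfl
    · rw [domIndex_ins hok a']
      have := hf.2 a'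
      simpa using this
    · have := domIndex_last_le (ins f c h)
      simp only [Fin.val_last]
      omega

end S13

namespace S13
variable {m : ℕ}

lemma card_col_ins {f : Fin m → Fin m} {c : Fin (m+1)} {h : ℕ} (hok : InsOK f c h) :
    (univ.filter fun b : Fin (m+1) => (ins f c h b : ℕ) = (c : ℕ) ∧ b ≠ Fin.last m).card
      = h := by
  have key : (univ.filter fun b : Fin (m+1) => (ins f c h b : ℕ) = (c : ℕ) ∧ b ≠ Fin.last m)
      = (univ.filter fun b : Fin m => (f b : ℕ) = (c : ℕ) ∧ rank f b < h).image Fin.castSucc := by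
    ext b
    simp only [mem_filter, mem_univ, true_and, mem_image]
    constructor
    · intro hb
      rcases Fin.eq_castSucc_or_eq_last b with ⟨b', rfl⟩ | rfl
      · refine ⟨b', ?_, rfl⟩
        have := hb.1
        rwa [ins_val_eq_c] at this
      · exact absurd rfl hb.2
    · rintro ⟨b', hb', rfl⟩
      constructor
      · rw [ins_val_eq_c]; exact hb'
      · exact Fin.ne_of_lt (Fin.castSucc_lt_last b')
  rw [key, Finset.card_image_of_injective _ (Fin.castSucc_injective m), card_bottom]
  have := hok.le_hcol
  omega

lemma ins_recover_f {f : Fin m → Fin m} {c : Fin (m+1)} {h : ℕ} (a : Fin m) :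
    (f a : ℕ) = if (ins f c h a.castSucc : ℕ) ≤ (c : ℕ)
      then (ins f c h a.castSucc : ℕ) else (ins f c h a.castSucc : ℕ) - 1 := by
  rw [ins_val]
  by_cases hs : stays f (c : ℕ) h a
  · have := stays_le hs
    rw [if_pos hs, if_pos this]
  · have := not_stays_ge hs
    rw [if_neg hs, if_neg (by omega)]
    omega

lemma card_val_lt {n t : ℕ} (ht : t ≤ n) :
    (univ.filter fun x : Fin n => (x : ℕ) < t).card = t := by
  have key : (univ.filter fun x : Fin n => (x : ℕ) < t).card = (Finset.range t).card := by
    apply Finset.card_nbij (i := Fin.val)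
    · intro x hx
      simp only [coe_filter, mem_filter, mem_univ, true_and, Set.mem_setOf_eq] at hx
      simpa using hx
    · intro x _ y _ hxy
      exact Fin.ext hxy
    · intro x hx
      simp only [Finset.coe_range, Set.mem_Iio] at hx
      exact ⟨⟨x, by omega⟩, by simp only [coe_filter, mem_univ, Set.mem_setOf_eq, true_and]; exact hx, rfl⟩
  rw [key, Finset.card_range]

lemma hcol_le (f : Fin m → Fin m) (C : ℕ) : hcol f C ≤ m := by
  unfold hcol
  calc (univ.filter fun a => (f a : ℕ) = C).card ≤ (univ : Finset (Fin m)).card :=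
        Finset.card_le_card (filter_subset _ _)
    _ = m := by simp

lemma sum_hcol (f : Fin m → Fin m) : ∑ d : Fin m, hcol f (d : ℕ) = m := by
  have := Finset.card_eq_sum_card_fiberwise (f := f) (s := (univ : Finset (Fin m)))
    (t := (univ : Finset (Fin m))) (fun x _ => mem_univ _)
  rw [Finset.card_univ, Fintype.card_fin] at this
  have h2 : ∑ d : Fin m, hcol f (d : ℕ) =
      ∑ d : Fin m, (univ.filter fun a => f a = d).card := by
    apply Finset.sum_congr rfl
    intro d _
    unfold hcol
    congr 1
    ext a
    simp only [mem_filter, mem_univ, true_and]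
    exact ⟨fun hh => Fin.ext hh, fun hh => congrArg Fin.val hh⟩
  rw [h2]
  exact this.symm

lemma card_insSet (f : Fin m → Fin m) :
    ∑ c : Fin (m+1), (univ.filter fun hh : Fin (m+1) => InsOK f c (hh : ℕ)).card =
      2 * (m + 1) - 1 - (univ.filter fun d : Fin m => ∃ a, f a = d).card := by
  have hN : (univ.filter fun d : Fin m => ∃ a, f a = d).card ≤ m := by
    calc _ ≤ (univ : Finset (Fin m)).card := Finset.card_le_card (filter_subset _ _)
      _ = m := by simp
  rw [Fin.sum_univ_castSucc]
  -- last column term = 1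
  have hlastterm : (univ.filter fun hh : Fin (m+1) =>
      InsOK f (Fin.last m) (hh : ℕ)).card = 1 := by
    have : (univ.filter fun hh : Fin (m+1) => InsOK f (Fin.last m) (hh : ℕ)) = {0} := by
      ext hh
      simp only [mem_filter, mem_univ, true_and, mem_singleton]
      constructor
      · intro hhh
        have := hhh.1 (by simp)
        exact Fin.ext (by simpa using this)
      · rintro rfl
        refine ⟨fun _ => rfl, fun hc => ?_⟩
        simp only [Fin.val_last] at hc
        omega
    rw [this, Finset.card_singleton]
  rw [hlastterm]
  -- each other column contributes max (hcol f c) 1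
  have hterm : ∀ d : Fin m, (univ.filter fun hh : Fin (m+1) =>
      InsOK f (d.castSucc) (hh : ℕ)).card = max (hcol f (d : ℕ)) 1 := by
    intro d
    have hdm : (d.castSucc : ℕ) < m := by simpa using d.isLt
    have : (univ.filter fun hh : Fin (m+1) => InsOK f (d.castSucc) (hh : ℕ)) =
        (univ.filter fun hh : Fin (m+1) => (hh : ℕ) < max (hcol f (d : ℕ)) 1) := by
      ext hh
      rw [mem_filter, mem_filter]
      simp only [mem_univ, true_and, InsOK]
      constructor
      · intro hhh
        have := hhh.2 hdm
        simpa using this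
      · intro hhh
        constructor
        · intro hc; omega
        · intro _; simpa using hhh
    rw [this]
    apply card_val_lt
    have := hcol_le f (d : ℕ)
    omega
  rw [Finset.sum_congr rfl (fun d _ => hterm d)]
  -- Σ max (hcol f d) 1 = m + #empty columns
  have hmax : ∀ d : Fin m, max (hcol f (d : ℕ)) 1 =
      hcol f (d : ℕ) + (if hcol f (d : ℕ) = 0 then 1 else 0) := by
    intro d
    rcases Nat.eq_zero_or_pos (hcol f (d : ℕ)) with h0 | h0
    · simp [h0]
    · rw [if_neg (by omega)]; omega
  rw [Finset.sum_congr rfl (fun d _ => hmax d), Finset.sum_add_distrib, sum_hcol,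
    Finset.sum_boole]
  have hempty : (univ.filter fun d : Fin m => hcol f (d : ℕ) = 0).card =
      m - (univ.filter fun d : Fin m => ∃ a, f a = d).card := by
    have hcompl : (univ.filter fun d : Fin m => hcol f (d : ℕ) = 0) =
        univ \ (univ.filter fun d : Fin m => ∃ a, f a = d) := by
      ext d
      simp only [mem_filter, mem_univ, true_and, mem_sdiff]
      unfold hcol
      rw [Finset.card_eq_zero, Finset.filter_eq_empty_iff]
      constructor
      · intro hhh
        intro hex
        obtain ⟨a, rfl⟩ := hex
        exact hhh (mem_univ a) rfl
      · intro hhh a _ ha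
        exact hhh ⟨a, Fin.ext ha⟩
    rw [hcompl, Finset.card_sdiff_of_subset (filter_subset _ _)]
    simp
  simp only [Nat.cast_id]
  rw [hempty]
  omega

end S13

namespace S13
variable {m : ℕ}

lemma exists_preimage {Q : Fin (m+1) → Fin (m+1)} (hcpf : IsCPF (m+1) Q) (hg : IsGood m Q) :
    ∃ (f : Fin m → Fin m) (c : Fin (m+1)) (h : ℕ),
      IsCPF m f ∧ InsOK f c h ∧ h ≤ m ∧ ins f c h = Q := by
  classical
  set c := Q (Fin.last m) with hc
  set S := univ.filter (fun b : Fin (m+1) => Q b = c ∧ b ≠ Fin.last m) with hS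
  set h := S.card with hh
  have hcm1 : (c : ℕ) ≤ m := Nat.lt_succ_iff.mp c.isLt
  have hSmem : ∀ b, b ∈ S ↔ (Q b = c ∧ b ≠ Fin.last m) := by
    intro b; simp only [hS, mem_filter, mem_univ, true_and]
  -- if S is nonempty we get the data of case (b) of goodness
  have hr : S.Nonempty → ∃ r : Fin (m+1), r ≠ Fin.last m ∧ Q r = c ∧
      (∀ b, b ≠ Fin.last m → Q b = c → b ≤ r) ∧
      ∃ c' : Fin (m+1), (c' : ℕ) = (c : ℕ) + 1 ∧ (∃ b, Q b = c') ∧ ∀ b, Q b = c' → r < b := by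
    rintro ⟨b, hb⟩
    rw [hSmem] at hb
    rcases hg with hA | hB
    · exact absurd (hA b hb.1) hb.2
    · obtain ⟨r, hr1, hr2, hr3, c', hc'1, hc'2, hc'3⟩ := hB
      exact ⟨r, hr1, hr2, hr3, c', hc'1, hc'2, hc'3⟩
  have hcm : S.Nonempty → (c : ℕ) < m := by
    intro hne
    obtain ⟨r, -, -, -, c', hc'1, -, -⟩ := hr hne
    have := c'.isLt
    omega
  have hhm : h ≤ m := by
    have hsub : S ⊆ univ.erase (Fin.last m) := by
      intro b hb
      rw [hSmem] at hb
      exact Finset.mem_erase.mpr ⟨hb.2, mem_univ b⟩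
    have := Finset.card_le_card hsub
    rwa [Finset.card_erase_of_mem (mem_univ _), Finset.card_univ, Fintype.card_fin] at this
  -- the deleted parking function
  have hvf : ∀ a' : Fin m, (if (Q a'.castSucc : ℕ) ≤ (c : ℕ)
      then (Q a'.castSucc : ℕ) else (Q a'.castSucc : ℕ) - 1) < m := by
    intro a'
    set v := (Q a'.castSucc : ℕ) with hv
    have hvm : v ≤ m := Nat.lt_succ_iff.mp (Q a'.castSucc).isLt
    rcases Nat.lt_trichotomy v (c : ℕ) with h1 | h1 | h1
    · rw [if_pos (by omega)]; omega
    · rw [if_pos (by omega)]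
      have : (c : ℕ) < m := by
        apply hcm
        refine ⟨a'.castSucc, ?_⟩
        rw [hSmem]
        exact ⟨Fin.ext h1, Fin.ne_of_lt (Fin.castSucc_lt_last a')⟩
      omega
    · rw [if_neg (by omega)]; omega
  set f : Fin m → Fin m := fun a' => ⟨if (Q a'.castSucc : ℕ) ≤ (c : ℕ)
      then (Q a'.castSucc : ℕ) else (Q a'.castSucc : ℕ) - 1, hvf a'⟩ with hf
  have hfval : ∀ a' : Fin m, (f a' : ℕ) = if (Q a'.castSucc : ℕ) ≤ (c : ℕ)
      then (Q a'.castSucc : ℕ) else (Q a'.castSucc : ℕ) - 1 := fun a' => rfl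
  -- the main equation : ins f c h = Q
  have hE : ins f c h = Q := by
    funext b
    rcases Fin.eq_castSucc_or_eq_last b with ⟨a', rfl⟩ | rfl
    · apply Fin.ext
      rw [ins_val]
      set v := (Q a'.castSucc : ℕ) with hv
      have hvm : v ≤ m := Nat.lt_succ_iff.mp (Q a'.castSucc).isLt
      rcases Nat.lt_trichotomy v (c : ℕ) with h1 | h1 | h1
      · -- v < c : stays
        have hfa : (f a' : ℕ) = v := by rw [hfval]; rw [if_pos (by omega)]
        rw [if_pos (show stays f (c : ℕ) h a' from Or.inl (by omega))]
        exact hfa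
      · -- v = c : stays, via rank < h
        have hfa : (f a' : ℕ) = (c : ℕ) := by rw [hfval, if_pos (by omega)]; omega
        have haS : a'.castSucc ∈ S := by
          rw [hSmem]
          exact ⟨Fin.ext h1, Fin.ne_of_lt (Fin.castSucc_lt_last a')⟩
        obtain ⟨r, hr1, hr2, hr3, c', hc'1, hc'2, hc'3⟩ := hr ⟨_, haS⟩
        have hrank : rank f a' < h := by
          have hsub : (univ.filter fun b' : Fin m => f b' = f a' ∧ b' < a').image Fin.castSucc
              ⊂ S := by
            constructor
            · intro b hb
              simp only [mem_image, mem_filter, mem_univ, true_and] at hb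
              obtain ⟨b', hb', rfl⟩ := hb
              have hfb : (f b' : ℕ) = (c : ℕ) := by rw [congrArg Fin.val hb'.1]; exact hfa
              rw [hfval] at hfb
              rw [hSmem]
              refine ⟨?_, Fin.ne_of_lt (Fin.castSucc_lt_last b')⟩
              by_cases hle : (Q b'.castSucc : ℕ) ≤ (c : ℕ)
              · rw [if_pos hle] at hfb
                exact Fin.ext hfb
              · exfalso
                rw [if_neg hle] at hfb
                have hq : (Q b'.castSucc : ℕ) = (c : ℕ) + 1 := by omega
                have h5 : r < b'.castSucc := hc'3 b'.castSucc (Fin.ext (by rw [hc'1]; exact hq))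
                have h6 : a'.castSucc ≤ r :=
                  hr3 a'.castSucc (Fin.ne_of_lt (Fin.castSucc_lt_last a')) (Fin.ext h1)
                have h7 : a' < b' := Fin.castSucc_lt_castSucc_iff.mp (lt_of_le_of_lt h6 h5)
                exact absurd hb'.2 (not_lt.mpr (le_of_lt h7))
            · intro hsub'
              have := hsub' haS
              simp only [mem_image, mem_filter, mem_univ, true_and] at this
              obtain ⟨b', hb', hbe⟩ := this
              have : b' = a' := Fin.castSucc_injective m hbe
              rw [this] at hb'
              exact absurd hb'.2 (lt_irrefl a')
          have := Finset.card_lt_card hsub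
          rwa [Finset.card_image_of_injective _ (Fin.castSucc_injective m)] at this
        rw [if_pos (show stays f (c : ℕ) h a' from Or.inr ⟨hfa, hrank⟩)]
        omega
      · -- v > c : not stays
        have hfa : (f a' : ℕ) = v - 1 := by rw [hfval, if_neg (by omega)]
        by_cases h2 : v = (c : ℕ) + 1
        · -- f a' = c, need rank ≥ h
          have hrank : h ≤ rank f a' := by
            rcases Finset.eq_empty_or_nonempty S with hSe | hSne
            · rw [hh, hSe]; simp
            · obtain ⟨r, hr1, hr2, hr3, c', hc'1, hc'2, hc'3⟩ := hr hSne
              have hra : r < a'.castSucc := by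
                apply hc'3
                apply Fin.ext
                rw [hc'1]
                omega
              have hsub : S ⊆ (univ.filter fun b' : Fin m =>
                  f b' = f a' ∧ b' < a').image Fin.castSucc := by
                intro b hb
                rw [hSmem] at hb
                obtain ⟨b', rfl⟩ : ∃ b' : Fin m, b = Fin.castSucc b' := by
                  rcases Fin.eq_castSucc_or_eq_last b with ⟨b', rfl⟩ | rfl
                  · exact ⟨b', rfl⟩
                  · exact absurd rfl hb.2
                simp only [mem_image, mem_filter, mem_univ, true_and]
                refine ⟨b', ⟨?_, ?_⟩, rfl⟩
                · apply Fin.ext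
                  rw [hfval, if_pos (le_of_eq (congrArg Fin.val hb.1)), hfa]
                  rw [congrArg Fin.val hb.1]
                  omega
                · have := hr3 b'.castSucc (Fin.ne_of_lt (Fin.castSucc_lt_last b')) hb.1
                  have : b'.castSucc < a'.castSucc := lt_of_le_of_lt this hra
                  exact Fin.castSucc_lt_castSucc_iff.mp this
              have := Finset.card_le_card hsub
              rwa [Finset.card_image_of_injective _ (Fin.castSucc_injective m)] at this
          rw [if_neg ?side]
          · omega
          case side =>
            intro hst
            rcases hst with h3 | h3
            · omega
            · omega
        · -- v > c+1 : not stays, trivially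
          rw [if_neg ?side2]
          · omega
          case side2 =>
            intro hst
            have := stays_le hst
            omega
    · rw [ins_last, hc]
  have hok : InsOK f c h := by
    constructor
    · intro hcm'
      by_contra h0
      have hSne : S.Nonempty := Finset.card_pos.mp (by omega)
      obtain ⟨r, hr1, hr2, hr3, c', hc'1, hc'2, hc'3⟩ := hr hSne
      have := c'.isLt
      omega
    · intro hcmlt
      rcases Nat.eq_zero_or_pos h with h0 | h0
      · have := le_max_right (hcol f (c : ℕ)) 1
        omega
      · have hSne : S.Nonempty := Finset.card_pos.mp h0
        obtain ⟨r, hr1, hr2, hr3, c', hc'1, ⟨b, hb⟩, hc'3⟩ := hr hSne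
        have hbne : b ≠ Fin.last m := by
          intro he
          rw [he, ← hc] at hb
          have := congrArg Fin.val hb
          omega
        obtain ⟨b₀, rfl⟩ : ∃ b₀ : Fin m, b = Fin.castSucc b₀ := by
          rcases Fin.eq_castSucc_or_eq_last b with ⟨b₀, rfl⟩ | rfl
          · exact ⟨b₀, rfl⟩
          · exact absurd rfl hbne
        have hqb : (Q b₀.castSucc : ℕ) = (c : ℕ) + 1 := by
          rw [congrArg Fin.val hb]; exact hc'1
        have hfb : (f b₀ : ℕ) = (c : ℕ) := by
          rw [hfval, if_neg (by omega)]
          omega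
        have hsub : S ⊂ (univ.filter fun x : Fin m =>
            (f x : ℕ) = (c : ℕ)).image Fin.castSucc := by
          constructor
          · intro bS hbS
            rw [hSmem] at hbS
            obtain ⟨x, rfl⟩ : ∃ x : Fin m, bS = Fin.castSucc x := by
              rcases Fin.eq_castSucc_or_eq_last bS with ⟨x, rfl⟩ | rfl
              · exact ⟨x, rfl⟩
              · exact absurd rfl hbS.2
            simp only [mem_image, mem_filter, mem_univ, true_and]
            refine ⟨x, ?_, rfl⟩
            show (f x : ℕ) = (c : ℕ)
            rw [hfval, if_pos (le_of_eq (congrArg Fin.val hbS.1))]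
            exact congrArg Fin.val hbS.1
          · intro hsub'
            have hmem : b₀.castSucc ∈ (univ.filter fun x : Fin m =>
                (f x : ℕ) = (c : ℕ)).image Fin.castSucc := by
              simp only [mem_image, mem_filter, mem_univ, true_and]
              exact ⟨b₀, hfb, rfl⟩
            have := hsub' hmem
            rw [hSmem] at this
            have := congrArg Fin.val this.1
            omega
        have := Finset.card_lt_card hsub
        rw [Finset.card_image_of_injective _ (Fin.castSucc_injective m)] at this
        have hle : h < hcol f (c : ℕ) := this
        have := le_max_left (hcol f (c : ℕ)) 1
        omega
  refine ⟨f, c, h, ⟨?_, ?_⟩, hok, hhm, hE⟩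
  · -- parking
    intro i him
    rcases le_or_gt i ((c : ℕ)) with hic | hic
    · have key : (univ.filter fun b : Fin (m+1) => (Q b : ℕ) < i) =
          (univ.filter fun a : Fin m => (f a : ℕ) < i).image Fin.castSucc := by
        ext b
        simp only [mem_filter, mem_univ, true_and, mem_image]
        constructor
        · intro hb
          rcases Fin.eq_castSucc_or_eq_last b with ⟨b', rfl⟩ | rfl
          · refine ⟨b', ?_, rfl⟩
            show (f b' : ℕ) < i
            rw [hfval]
            split <;> omega
          · rw [← hc] at hb
            omega
        · rintro ⟨b', hb', rfl⟩
          have hb2 : (f b' : ℕ) < i := hb'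
          rw [hfval] at hb2
          split at hb2 <;> omega
      have := hcpf.1 i (by omega)
      rw [key, Finset.card_image_of_injective _ (Fin.castSucc_injective m)] at this
      exact this
    · have hA : Fin.last m ∈ (univ.filter fun b : Fin (m+1) => (Q b : ℕ) < i + 1) := by
        simp only [mem_filter, mem_univ, true_and]
        rw [← hc]
        omega
      have key : (univ.filter fun b : Fin (m+1) => (Q b : ℕ) < i + 1).erase (Fin.last m) =
          (univ.filter fun a : Fin m => (f a : ℕ) < i).image Fin.castSucc := by
        ext b
        simp only [Finset.mem_erase, mem_filter, mem_univ, true_and, mem_image]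
        constructor
        · rintro ⟨hbne, hb⟩
          rcases Fin.eq_castSucc_or_eq_last b with ⟨b', rfl⟩ | rfl
          · refine ⟨b', ?_, rfl⟩
            show (f b' : ℕ) < i
            rw [hfval]
            split <;> omega
          · exact absurd rfl hbne
        · rintro ⟨b', hb', rfl⟩
          refine ⟨Fin.ne_of_lt (Fin.castSucc_lt_last b'), ?_⟩
          have hb2 : (f b' : ℕ) < i := hb'
          rw [hfval] at hb2
          split at hb2 <;> omega
      have hcard := hcpf.1 (i+1) (by omega)
      have := Finset.card_erase_of_mem hA
      rw [key, Finset.card_image_of_injective _ (Fin.castSucc_injective m)] at this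
      omega
  · -- dominance
    intro a'
    have hdi := domIndex_ins hok a'
    rw [hE] at hdi
    have := hcpf.2 a'.castSucc
    rw [hdi] at this
    simpa using this

end S13

/-- For every n ≥ 2 (written n = m+1, m ≥ 1), the number of good column-restricted
parking functions of size n is
Σ_{P ∈ CPF(n-1)} (2n-1 − #{nonempty columns of P}). -/
theorem statement13 (m : ℕ) (hm : 1 ≤ m) :
    Nat.card {f : Fin (m + 1) → Fin (m + 1) // IsCPF (m + 1) f ∧ IsGood m f} =
      ∑ f ∈ Finset.univ.filter (fun f : Fin m → Fin m => IsCPF m f),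
        (2 * (m + 1) - 1 -
          (Finset.univ.filter (fun c : Fin m => ∃ a, f a = c)).card) := by
  classical
  rw [Nat.card_eq_fintype_card, Fintype.card_subtype]
  have hterm : ∀ f : Fin m → Fin m,
      2 * (m + 1) - 1 - (Finset.univ.filter (fun c : Fin m => ∃ a, f a = c)).card =
      ((univ : Finset (Fin (m+1))).sigma fun c =>
        univ.filter fun hh : Fin (m+1) => S13.InsOK f c (hh : ℕ)).card := by
    intro f
    rw [Finset.card_sigma]
    exact (S13.card_insSet f).symm
  rw [Finset.sum_congr rfl (fun f _ => hterm f), ← Finset.card_sigma]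
  symm
  apply Finset.card_bij (fun x _ => S13.ins x.1 x.2.1 ((x.2.2 : ℕ)))
  · -- maps into the target
    rintro ⟨f, c, hh⟩ hx
    simp only [Finset.mem_sigma, mem_univ, true_and, mem_filter] at hx
    obtain ⟨hf, hok⟩ := hx
    simp only [mem_filter, mem_univ, true_and]
    exact ⟨S13.cpf_ins hok hf, S13.good_ins hok⟩
  · -- injective
    rintro ⟨f₁, c₁, h₁⟩ hx₁ ⟨f₂, c₂, h₂⟩ hx₂ he
    simp only [Finset.mem_sigma, mem_univ, true_and, mem_filter] at hx₁ hx₂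
    obtain ⟨hf₁, hok₁⟩ := hx₁
    obtain ⟨hf₂, hok₂⟩ := hx₂
    simp only at he
    have hc : c₁ = c₂ := by
      have h1 := S13.ins_last f₁ c₁ (h₁ : ℕ)
      have h2 := S13.ins_last f₂ c₂ (h₂ : ℕ)
      rw [← h1, ← h2, he]
    have hcv : (c₁ : ℕ) = (c₂ : ℕ) := congrArg Fin.val hc
    have hhn : (h₁ : ℕ) = (h₂ : ℕ) := by
      have e1 := S13.card_col_ins hok₁
      have e2 := S13.card_col_ins hok₂
      rw [← e1, ← e2, he, hcv]
    have hfe : f₁ = f₂ := by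
      funext a'
      apply Fin.ext
      rw [S13.ins_recover_f (c := c₁) (h := (h₁ : ℕ)) a',
        S13.ins_recover_f (c := c₂) (h := (h₂ : ℕ)) a', he, hcv]
    subst hfe
    subst hc
    have : h₁ = h₂ := Fin.ext hhn
    subst this
    rfl
  · -- surjective
    intro Q hQ
    simp only [mem_filter, mem_univ, true_and] at hQ
    obtain ⟨f, c, h, hcpf', hok, hhm, hE⟩ := S13.exists_preimage hQ.1 hQ.2
    refine ⟨⟨f, c, ⟨h, by omega⟩⟩, ?_, hE⟩
    simp only [Finset.mem_sigma, mem_univ, true_and, mem_filter]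
    exact ⟨hcpf', hok⟩
end
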